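/- arXiv:2508.06005 — 2 statements merged into one kernel-verified Lean document; each statement's English description precedes it below -/
import Mathlib

section
/- Let x ≥ 2 and A, B > 0. If f:ℕ→ℝ_{≥0} is a multiplicative function such that f(p) ≤ A for all primes p and ∑_p ∑_{ℓ≥2} f(p^ℓ)/p^ℓ ≤ B, then there exist constants 0 < K₁ ≤ K₂ depending only on A and B such that K₁·exp(∑_{p≤x} f(p)/p) ≤ ∑_{n≤x} f(n)/n ≤ K₂·exp(∑_{p≤x} f(p)/p). -/
open scoped Classical

noncomputable section

/-- `Ω n`: the number of prime factors of `n` counted with multiplicity. -/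
def bigOmega (n : ℕ) : ℕ := n.primeFactorsList.length

/-- `ω n`: the number of distinct prime factors of `n`. -/
def smallOmega (n : ℕ) : ℕ := n.primeFactors.card

/-- `ω(n, E)`: the number of distinct prime factors of `n` lying in `E`. -/
def omegaE (E : Set ℕ) (n : ℕ) : ℕ := (n.primeFactors.filter fun p => p ∈ E).card

/-- `Ω(n, E)`: the number of pairs `(p, ℓ)` with `p ∈ E`, `ℓ ≥ 1` and `p ^ ℓ ∣ n`. -/
def bigOmegaE (E : Set ℕ) (n : ℕ) : ℕ :=
  ∑ p ∈ n.primeFactors.filter (fun p => p ∈ E), n.factorization p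

/-- The class `𝓜(A₁, A₂)` of nonnegative multiplicative functions. -/
structure MClass (A₁ : ℝ) (A₂ : ℝ → ℝ) (f : ℕ → ℝ) : Prop where
  nonneg : ∀ n, 0 ≤ f n
  map_one : f 1 = 1
  mult : ∀ m n : ℕ, Nat.Coprime m n → f (m * n) = f m * f n
  le_pow : ∀ n : ℕ, 0 < n → f n ≤ A₁ ^ bigOmega n
  le_eps : ∀ ε : ℝ, 0 < ε → ∀ n : ℕ, 0 < n → f n ≤ A₂ ε * (n : ℝ) ^ ε

/-- The finset of primes `p ≤ x`. -/
def primesUpTo (x : ℝ) : Finset ℕ := (Finset.range (⌊x⌋₊ + 1)).filter Nat.Prime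

/-- `M_f(x, E) = ∑_{p ≤ x, p ∈ E} f(p)/p`. -/
def MfE (f : ℕ → ℝ) (x : ℝ) (E : Set ℕ) : ℝ :=
  ∑ p ∈ (primesUpTo x).filter (fun p => p ∈ E), f p / p

/-- `M_f(x) = ∑_{p ≤ x} f(p)/p`. -/
def Mf (f : ℕ → ℝ) (x : ℝ) : ℝ := ∑ p ∈ primesUpTo x, f p / p

/-- `M_ν(x) = ∑_{p ≤ x} ν(p)/p`. -/
def Mnu (ν : ℕ → ℕ) (x : ℝ) : ℝ := ∑ p ∈ primesUpTo x, (ν p : ℝ) / p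

/-- The sifted set `𝒮` of positive integers `n ≤ x` with `n mod p ∉ ℰ p` for every prime `p`. -/
def sifted (x : ℝ) (ℰ : (p : ℕ) → Set (ZMod p)) : Finset ℕ :=
  (Finset.Icc 1 ⌊x⌋₊).filter fun n => ∀ p : ℕ, p.Prime → ((n : ZMod p) ∉ ℰ p)

/-- The sieve data: each `ℰ p` is a set of `ν p ≤ v` units of `ℤ/pℤ`. -/
structure SiftData (v : ℕ) (ℰ : (p : ℕ) → Set (ZMod p)) (ν : ℕ → ℕ) : Prop where
  finite : ∀ p : ℕ, p.Prime → (ℰ p).Finite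
  unit : ∀ p : ℕ, p.Prime → ∀ a ∈ ℰ p, IsUnit a
  card : ∀ p : ℕ, p.Prime → (ℰ p).ncard = ν p
  le_v : ∀ p : ℕ, p.Prime → ν p ≤ v


lemma theta_le (m : ℕ) :
    ∑ p ∈ (Finset.range (m+1)).filter Nat.Prime, Real.log p ≤ m * Real.log 4 := by
  have h1 : ∑ p ∈ (Finset.range (m+1)).filter Nat.Prime, Real.log p
      = Real.log ((primorial m : ℕ) : ℝ) := by
    rw [primorial, Nat.cast_prod, Real.log_prod]
    intro p hp
    have hp' : p.Prime := (Finset.mem_filter.mp hp).2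
    exact_mod_cast hp'.ne_zero
  rw [h1]
  calc Real.log ((primorial m : ℕ) : ℝ) ≤ Real.log ((4 ^ m : ℕ) : ℝ) := by
        apply Real.log_le_log (by exact_mod_cast (primorial_pos m))
        exact_mod_cast primorial_le_4_pow m
    _ = m * Real.log 4 := by
        push_cast
        rw [Real.log_pow]

lemma mertens_le : ∀ m : ℕ, 1 ≤ m →
    ∑ p ∈ (Finset.range (m+1)).filter Nat.Prime, Real.log p / p ≤ 4 * Real.log m := by
  intro m
  induction m using Nat.strong_induction_on with
  | _ m ih =>
    intro hm
    rcases eq_or_lt_of_le hm with h1 | h2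
    · -- m = 1
      rw [← h1]
      have he : (Finset.range 2).filter Nat.Prime = ∅ := by decide
      rw [he]
      simp
    · -- m ≥ 2
      have hm2 : 2 ≤ m := h2
      set h := m / 2 with hh
      have hh1 : 1 ≤ h := Nat.one_le_div_iff (by norm_num) |>.mpr hm2
      have hhm : h < m := Nat.div_lt_self (by omega) (by norm_num)
      have hsplit : ∑ p ∈ (Finset.range (m+1)).filter Nat.Prime, Real.log p / p
          = ∑ p ∈ (Finset.range (h+1)).filter Nat.Prime, Real.log p / p
            + ∑ p ∈ (Finset.Ico (h+1) (m+1)).filter Nat.Prime, Real.log p / p := by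
        rw [← Finset.sum_union]
        · congr 1
          ext p
          simp only [Finset.mem_union, Finset.mem_filter, Finset.mem_range, Finset.mem_Ico]
          constructor
          · rintro ⟨ha, hb⟩
            rcases Nat.lt_or_ge p (h+1) with hc|hc
            · exact Or.inl ⟨hc, hb⟩
            · exact Or.inr ⟨⟨hc, ha⟩, hb⟩
          · rintro (⟨ha,hb⟩|⟨⟨ha,ha'⟩,hb⟩) <;> exact ⟨by omega, hb⟩
        · rw [Finset.disjoint_left]
          intro p hp hp2
          simp only [Finset.mem_filter, Finset.mem_range, Finset.mem_Ico] at hp hp2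
          omega
      rw [hsplit]
      have hIH := ih h hhm hh1
      have htail : ∑ p ∈ (Finset.Ico (h+1) (m+1)).filter Nat.Prime, Real.log p / p
          ≤ 4 * Real.log 2 := by
        have step1 : ∑ p ∈ (Finset.Ico (h+1) (m+1)).filter Nat.Prime, Real.log p / p
            ≤ ∑ p ∈ (Finset.Ico (h+1) (m+1)).filter Nat.Prime, Real.log p * (2 / m) := by
          apply Finset.sum_le_sum
          intro p hp
          simp only [Finset.mem_filter, Finset.mem_Ico] at hp
          obtain ⟨⟨hp1, hp3⟩, hpp⟩ := hp
          have hp2 : 2 ≤ p := hpp.two_le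
          have hlog : 0 ≤ Real.log p := Real.log_natCast_nonneg p
          rw [div_eq_mul_inv]
          apply mul_le_mul_of_nonneg_left _ hlog
          rw [inv_le_iff_one_le_mul₀ (by positivity)]
          have : m < 2 * p := by omega
          have hmp : (m : ℝ) < 2 * p := by exact_mod_cast this
          rw [div_mul_eq_mul_div, le_div_iff₀ (by positivity)]
          linarith
        refine step1.trans ?_
        rw [← Finset.sum_mul]
        have hθ : ∑ p ∈ (Finset.Ico (h+1) (m+1)).filter Nat.Prime, Real.log p
            ≤ m * Real.log 4 := by
          refine le_trans ?_ (theta_le m)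
          apply Finset.sum_le_sum_of_subset_of_nonneg
          · intro p hp
            simp only [Finset.mem_filter, Finset.mem_Ico, Finset.mem_range] at hp ⊢
            exact ⟨by omega, hp.2⟩
          · intro p hp _
            simp only [Finset.mem_filter] at hp
            exact Real.log_natCast_nonneg p
        calc (∑ p ∈ (Finset.Ico (h+1) (m+1)).filter Nat.Prime, Real.log p) * (2 / m)
            ≤ (m * Real.log 4) * (2 / m) := by
              apply mul_le_mul_of_nonneg_right hθ
              positivity
          _ = 4 * Real.log 2 := by
              have hm0 : (m:ℝ) ≠ 0 := by positivity
              have : Real.log 4 = 2 * Real.log 2 := by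
                rw [show (4:ℝ) = 2^2 by norm_num, Real.log_pow]
                push_cast; ring
              field_simp [this]
              rw [this]; ring
      have hlog2h : 4 * Real.log h + 4 * Real.log 2 ≤ 4 * Real.log m := by
        have hlm : Real.log h + Real.log 2 = Real.log (2 * h) := by
          rw [Real.log_mul (by norm_num) (by positivity)]
          ring
        have h2h : (2 * h : ℝ) ≤ m := by
          have : 2 * h ≤ m := by omega
          exact_mod_cast this
        have hlogmono : Real.log (2 * h) ≤ Real.log m :=
          Real.log_le_log (by positivity) h2h
        nlinarith
      linarith

lemma invsq_le : ∀ M : ℕ, 1 ≤ M → ∑ n ∈ Finset.Icc 2 M, ((n:ℝ))⁻¹^2 ≤ 1 - (M:ℝ)⁻¹ := by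
  intro M
  induction M with
  | zero => intro h; omega
  | succ M ih =>
    intro _
    rcases Nat.eq_or_lt_of_le (Nat.one_le_iff_ne_zero.mpr (Nat.succ_ne_zero M)) with h1 | h2
    · have : M = 0 := by omega
      subst this; norm_num
    · have hM1 : 1 ≤ M := by omega
      rw [Finset.sum_Icc_succ_top (by omega)]
      have := ih hM1
      have hM : (1:ℝ) ≤ M := by exact_mod_cast hM1
      have h1 : ((M:ℝ)+1)⁻¹^2 ≤ (M:ℝ)⁻¹ - ((M:ℝ)+1)⁻¹ := by
        have key : (M:ℝ)⁻¹ - ((M:ℝ)+1)⁻¹ = (((M:ℝ)*((M:ℝ)+1)))⁻¹ := by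
          field_simp
          ring
        rw [key, inv_pow]
        apply inv_anti₀ (by positivity)
        nlinarith
      push_cast
      linarith

lemma invsq_finset {s : Finset ℕ} (hs : ∀ n ∈ s, 2 ≤ n) : ∑ n ∈ s, ((n:ℝ))⁻¹^2 ≤ 1 := by
  classical
  set M := max 1 (s.sup id) with hM
  have hsub : s ⊆ Finset.Icc 2 M := by
    intro n hn
    simp only [Finset.mem_Icc]
    exact ⟨hs n hn, le_max_of_le_right (Finset.le_sup (f := id) hn)⟩
  calc ∑ n ∈ s, ((n:ℝ))⁻¹^2 ≤ ∑ n ∈ Finset.Icc 2 M, ((n:ℝ))⁻¹^2 := by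
        apply Finset.sum_le_sum_of_subset_of_nonneg hsub
        intro i _ _; positivity
    _ ≤ 1 - (M:ℝ)⁻¹ := invsq_le M (le_max_left _ _)
    _ ≤ 1 := by
        have : (0:ℝ) ≤ (M:ℝ)⁻¹ := by positivity
        linarith

lemma exp_le_one_add_mul_exp_sq {t : ℝ} (ht : 0 ≤ t) :
    Real.exp t ≤ (1 + t) * Real.exp (t^2) := by
  rcases le_or_gt 1 t with h1 | h1
  · have h2 : t ≤ t^2 := by nlinarith
    calc Real.exp t ≤ Real.exp (t^2) := Real.exp_le_exp.mpr h2
      _ ≤ (1+t) * Real.exp (t^2) := by nlinarith [Real.exp_pos (t^2)]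
  · have key : Real.exp (t - t^2) ≤ 1 + t := by
      have h3 : 1 + (t^2 - t) ≤ Real.exp (t^2 - t) := by
        have := Real.add_one_le_exp (t^2 - t); linarith
      have h4 : Real.exp (t - t^2) = (Real.exp (t^2 - t))⁻¹ := by
        rw [← Real.exp_neg]; ring_nf
      rw [h4]
      have h5 : 0 < 1 + (t^2 - t) := by nlinarith
      have h6 : (Real.exp (t^2 - t))⁻¹ ≤ (1 + (t^2 - t))⁻¹ := by
        apply inv_anti₀ h5 h3
      refine h6.trans ?_
      rw [inv_le_iff_one_le_mul₀ (by linarith)]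
      nlinarith
    calc Real.exp t = Real.exp (t - t^2) * Real.exp (t^2) := by
          rw [← Real.exp_add]; ring_nf
      _ ≤ (1+t) * Real.exp (t^2) := by
          apply mul_le_mul_of_nonneg_right key (Real.exp_pos _).le

lemma exp_sub_one_le' {t : ℝ} (ht0 : 0 ≤ t) (ht1 : t ≤ 1) :
    Real.exp t - 1 ≤ t * Real.exp 1 := by
  have h1 : 1 - t ≤ Real.exp (-t) := by
    have := Real.add_one_le_exp (-t); linarith
  have h2 : (1 - t) * Real.exp t ≤ 1 := by
    calc (1 - t) * Real.exp t ≤ Real.exp (-t) * Real.exp t := by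
          apply mul_le_mul_of_nonneg_right h1 (Real.exp_pos _).le
      _ = 1 := by rw [← Real.exp_add]; simp
  have h3 : Real.exp t ≤ Real.exp 1 := Real.exp_le_exp.mpr ht1
  nlinarith [Real.exp_pos t]

lemma map_prod_primes (f : ℕ → ℝ) (hf1 : f 1 = 1)
    (hmul : ∀ m n : ℕ, Nat.Coprime m n → f (m * n) = f m * f n)
    (s : Finset ℕ) (hs : ∀ p ∈ s, p.Prime) (e : ℕ → ℕ) :
    f (∏ p ∈ s, p ^ e p) = ∏ p ∈ s, f (p ^ e p) := by
  classical
  induction s using Finset.induction_on with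
  | empty => simpa using hf1
  | @insert a s' ha ih =>
    rw [Finset.prod_insert ha, Finset.prod_insert ha, ← ih (fun p hp => hs p (Finset.mem_insert_of_mem hp))]
    apply hmul
    have hap : a.Prime := hs a (Finset.mem_insert_self a s')
    apply Nat.Coprime.pow_left
    apply Nat.Coprime.prod_right
    intro q hq
    have hqp : q.Prime := hs q (Finset.mem_insert_of_mem hq)
    have hne : a ≠ q := by rintro rfl; exact ha hq
    exact Nat.Coprime.pow_right _ ((Nat.coprime_primes hap hqp).mpr hne)

lemma sum_div_le_prod (f : ℕ → ℝ) (hf0 : ∀ n, 0 ≤ f n) (hf1 : f 1 = 1)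
    (hmul : ∀ m n : ℕ, Nat.Coprime m n → f (m * n) = f m * f n) (L : ℕ) :
    ∀ (P : Finset ℕ), (∀ p ∈ P, p.Prime) → ∀ (N : Finset ℕ),
    (∀ n ∈ N, n ≠ 0 ∧ n.primeFactors ⊆ P ∧ ∀ p, n.factorization p ≤ L) →
    ∑ n ∈ N, f n / n ≤ ∏ p ∈ P, ∑ ℓ ∈ Finset.range (L+1), f (p^ℓ) / (p:ℝ)^ℓ := by
  classical
  intro P
  induction P using Finset.induction_on with
  | empty =>
    intro _ N hN
    have hsub : N ⊆ {1} := by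
      intro n hn
      obtain ⟨hn0, hnp, -⟩ := hN n hn
      have : n.primeFactors = ∅ := Finset.subset_empty.mp hnp
      rcases Nat.primeFactors_eq_empty.mp this with h | h
      · exact absurd h hn0
      · simp [h]
    calc ∑ n ∈ N, f n / n ≤ ∑ n ∈ ({1} : Finset ℕ), f n / n := by
          apply Finset.sum_le_sum_of_subset_of_nonneg hsub
          intro i _ _
          have := hf0 i
          positivity
      _ = 1 := by simp [hf1]
      _ = _ := by simp
  | @insert q P' hq ihP =>
    intro hPP N hN
    have hqp : q.Prime := hPP q (Finset.mem_insert_self q P')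
    have hP' : ∀ p ∈ P', p.Prime := fun p hp => hPP p (Finset.mem_insert_of_mem hp)
    -- fiber decomposition along the q-adic valuation
    have hmaps : ∀ n ∈ N, n.factorization q ∈ Finset.range (L+1) := by
      intro n hn
      simp only [Finset.mem_range]
      exact Nat.lt_succ_of_le ((hN n hn).2.2 q)
    rw [← Finset.sum_fiberwise_of_maps_to hmaps (fun n => f n / n)]
    have key : ∀ ℓ ∈ Finset.range (L+1),
        ∑ n ∈ N.filter (fun n => n.factorization q = ℓ), f n / n
        ≤ (f (q^ℓ) / (q:ℝ)^ℓ) * ∏ p ∈ P', ∑ ℓ ∈ Finset.range (L+1), f (p^ℓ) / (p:ℝ)^ℓ := by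
      intro ℓ _
      set Nf := N.filter (fun n => n.factorization q = ℓ) with hNf
      set G : ℕ → ℝ := fun m => f m / (m : ℝ) with hG
      have hterm : ∀ n ∈ Nf, f n / n = (f (q^ℓ) / (q:ℝ)^ℓ) * G (ordCompl[q] n) := by
        intro n hn
        simp only [hNf, Finset.mem_filter] at hn
        obtain ⟨hnN, hv⟩ := hn
        obtain ⟨hn0, -, -⟩ := hN n hnN
        set m : ℕ := ordCompl[q] n with hm
        have hsplit : q ^ ℓ * m = n := by
          rw [hm, ← hv]; exact Nat.ordProj_mul_ordCompl_eq_self n q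
        have hcop : Nat.Coprime (q ^ ℓ) m :=
          Nat.Coprime.pow_left _ (Nat.coprime_ordCompl hqp hn0)
        have hfn : f n = f (q^ℓ) * f m := by
          rw [← hsplit, hmul _ _ hcop]
        have hcast : (n:ℝ) = (q:ℝ)^ℓ * (m:ℝ) := by
          rw [← hsplit]; push_cast; ring
        have hq0 : ((q:ℝ))^ℓ ≠ 0 := by
          have := hqp.pos; positivity
        have hm0 : (m:ℝ) ≠ 0 := by
          have : 0 < m := Nat.ordCompl_pos q hn0
          positivity
        rw [hfn, hcast, hG]
        field_simp
      rw [Finset.sum_congr rfl hterm, ← Finset.mul_sum]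
      apply mul_le_mul_of_nonneg_left _ (by have h1 := hf0 (q^ℓ); have h2 := hqp.pos; positivity)
      have hinj : ∀ n1 ∈ Nf, ∀ n2 ∈ Nf, ordCompl[q] n1 = ordCompl[q] n2 → n1 = n2 := by
        intro n1 h1 n2 h2 he
        simp only [hNf, Finset.mem_filter] at h1 h2
        have e1 : q ^ ℓ * ordCompl[q] n1 = n1 := by
          rw [← h1.2]; exact Nat.ordProj_mul_ordCompl_eq_self n1 q
        have e2 : q ^ ℓ * ordCompl[q] n2 = n2 := by
          rw [← h2.2]; exact Nat.ordProj_mul_ordCompl_eq_self n2 q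
        rw [← e1, ← e2, he]
      rw [← Finset.sum_image (g := fun n => ordCompl[q] n) (f := G) hinj]
      apply ihP hP'
      intro m hm
      simp only [hNf, Finset.mem_image, Finset.mem_filter] at hm
      obtain ⟨n, ⟨hnN, hv⟩, rfl⟩ := hm
      obtain ⟨hn0, hnP, hnL⟩ := hN n hnN
      have hmdvd : ordCompl[q] n ∣ n := Nat.ordCompl_dvd n q
      have hm0 : ordCompl[q] n ≠ 0 := (Nat.ordCompl_pos q hn0).ne'
      refine ⟨hm0, ?_, ?_⟩
      · intro p hp
        have hpn : p ∈ n.primeFactors := Nat.primeFactors_mono hmdvd hn0 hp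
        have hpin : p ∈ insert q P' := hnP hpn
        rcases Finset.mem_insert.mp hpin with rfl | hpP'
        · exfalso
          have hqd : p ∣ ordCompl[p] n := Nat.dvd_of_mem_primeFactors hp
          exact Nat.not_dvd_ordCompl hqp hn0 hqd
        · exact hpP'
      · intro p
        calc (ordCompl[q] n).factorization p ≤ n.factorization p :=
              (Nat.factorization_le_iff_dvd hm0 hn0).mpr hmdvd p
          _ ≤ L := hnL p
    calc ∑ ℓ ∈ Finset.range (L+1), ∑ n ∈ N.filter (fun n => n.factorization q = ℓ), f n / n
        ≤ ∑ ℓ ∈ Finset.range (L+1), (f (q^ℓ) / (q:ℝ)^ℓ) * ∏ p ∈ P', ∑ ℓ ∈ Finset.range (L+1), f (p^ℓ) / (p:ℝ)^ℓ :=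
          Finset.sum_le_sum key
      _ = _ := by
          rw [← Finset.sum_mul, Finset.prod_insert hq]


lemma upper_bound_aux (A B : ℝ) (x : ℝ) (f : ℕ → ℝ)
    (hx : 2 ≤ x)
    (hf0 : ∀ n, 0 ≤ f n) (hf1 : f 1 = 1)
    (hmul : ∀ m n : ℕ, Nat.Coprime m n → f (m * n) = f m * f n)
    (htail : ∀ P L : ℕ, ∑ p ∈ (Finset.range P).filter Nat.Prime,
        ∑ ℓ ∈ Finset.Icc 2 L, f (p ^ ℓ) / (p : ℝ) ^ ℓ ≤ B) :
    ∑ n ∈ Finset.Icc 1 ⌊x⌋₊, f n / n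
      ≤ Real.exp B * Real.exp (∑ p ∈ primesUpTo x, f p / p) := by
  classical
  set M := ⌊x⌋₊ with hM
  have hM2 : 2 ≤ M := by
    rw [hM]
    exact Nat.le_floor (by exact_mod_cast hx)
  set P := primesUpTo x with hP
  have hPprime : ∀ p ∈ P, p.Prime := by
    intro p hp
    exact (Finset.mem_filter.mp hp).2
  have step1 : ∑ n ∈ Finset.Icc 1 M, f n / n
      ≤ ∏ p ∈ P, ∑ ℓ ∈ Finset.range (M+1), f (p^ℓ) / (p:ℝ)^ℓ := by
    apply sum_div_le_prod f hf0 hf1 hmul M P hPprime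
    intro n hn
    simp only [Finset.mem_Icc] at hn
    obtain ⟨hn1, hnM⟩ := hn
    have hn0 : n ≠ 0 := by omega
    refine ⟨hn0, ?_, ?_⟩
    · intro p hp
      have hpp : p.Prime := Nat.prime_of_mem_primeFactors hp
      have hpd : p ∣ n := Nat.dvd_of_mem_primeFactors hp
      have hpn : p ≤ n := Nat.le_of_dvd (by omega) hpd
      simp only [hP, primesUpTo, Finset.mem_filter, Finset.mem_range]
      exact ⟨by omega, hpp⟩
    · intro p
      have := Nat.factorization_lt (p := p) hn0
      omega
  refine step1.trans ?_
  -- split each local factor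
  have hsplit : ∀ p ∈ P, ∑ ℓ ∈ Finset.range (M+1), f (p^ℓ) / (p:ℝ)^ℓ
      = 1 + f p / p + ∑ ℓ ∈ Finset.Icc 2 M, f (p^ℓ) / (p:ℝ)^ℓ := by
    intro p hp
    have h02 : (0:ℕ) ≤ 2 := by omega
    have h2M : 2 ≤ M + 1 := by omega
    rw [Finset.range_eq_Ico, ← Finset.sum_Ico_consecutive _ h02 h2M, Finset.Ico_add_one_right_eq_Icc,
      show Finset.Ico 0 2 = Finset.Icc 0 1 from Finset.Ico_add_one_right_eq_Icc (a := 0) (b := 1)]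
    have hhead : ∑ ℓ ∈ Finset.Icc 0 1, f (p^ℓ) / (p:ℝ)^ℓ = 1 + f p / p := by
      rw [show Finset.Icc 0 1 = ({0,1} : Finset ℕ) from rfl, Finset.sum_pair (by norm_num)]
      simp [hf1]
    rw [hhead]
  rw [Finset.prod_congr rfl hsplit]
  have hfac : ∀ p ∈ P, 1 + f p / p + ∑ ℓ ∈ Finset.Icc 2 M, f (p^ℓ) / (p:ℝ)^ℓ
      ≤ (Real.exp (f p / p)) * Real.exp (∑ ℓ ∈ Finset.Icc 2 M, f (p^ℓ) / (p:ℝ)^ℓ) := by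
    intro p hp
    have hpp := hPprime p hp
    have hppos : (0:ℝ) < p := by exact_mod_cast hpp.pos
    have ha : 0 ≤ f p / p := by have := hf0 p; positivity
    have hb : 0 ≤ ∑ ℓ ∈ Finset.Icc 2 M, f (p^ℓ) / (p:ℝ)^ℓ := by
      apply Finset.sum_nonneg
      intro ℓ _
      have := hf0 (p^ℓ); positivity
    set a := f p / p
    set b := ∑ ℓ ∈ Finset.Icc 2 M, f (p^ℓ) / (p:ℝ)^ℓ
    have e1 : 1 + a ≤ Real.exp a := by have := Real.add_one_le_exp a; linarith
    have e2 : 1 + b ≤ Real.exp b := by have := Real.add_one_le_exp b; linarith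
    calc 1 + a + b ≤ (1+a) * (1+b) := by nlinarith
      _ ≤ Real.exp a * Real.exp b := by
          apply mul_le_mul e1 e2 (by linarith) (Real.exp_pos a).le
  calc ∏ p ∈ P, (1 + f p / p + ∑ ℓ ∈ Finset.Icc 2 M, f (p^ℓ) / (p:ℝ)^ℓ)
      ≤ ∏ p ∈ P, (Real.exp (f p / p)) * Real.exp (∑ ℓ ∈ Finset.Icc 2 M, f (p^ℓ) / (p:ℝ)^ℓ) := by
        apply Finset.prod_le_prod _ hfac
        intro p hp
        have hpp := hPprime p hp
        have hppos : (0:ℝ) < p := by exact_mod_cast hpp.pos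
        have ha : 0 ≤ f p / p := by have := hf0 p; positivity
        have hb : 0 ≤ ∑ ℓ ∈ Finset.Icc 2 M, f (p^ℓ) / (p:ℝ)^ℓ := by
          apply Finset.sum_nonneg
          intro ℓ _
          have := hf0 (p^ℓ); positivity
        linarith
    _ = Real.exp (∑ p ∈ P, f p / p) * Real.exp (∑ p ∈ P, ∑ ℓ ∈ Finset.Icc 2 M, f (p^ℓ) / (p:ℝ)^ℓ) := by
        rw [Finset.prod_mul_distrib, ← Real.exp_sum, ← Real.exp_sum]
    _ ≤ Real.exp B * Real.exp (∑ p ∈ P, f p / p) := by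
        rw [mul_comm]
        apply mul_le_mul_of_nonneg_right _ (Real.exp_pos _).le
        · apply Real.exp_le_exp.mpr
          exact htail (M+1) M

lemma powerset_expansion (f : ℕ → ℝ) (P : Finset ℕ) (g : ℕ → ℝ) :
    ∏ p ∈ P, (g p + 1) = ∑ S ∈ P.powerset, ∏ p ∈ S, g p := by
  classical
  rw [Finset.prod_add]
  apply Finset.sum_congr rfl
  intro S _
  simp

lemma prod_primes_term (f : ℕ → ℝ) (hf1 : f 1 = 1)
    (hmul : ∀ m n : ℕ, Nat.Coprime m n → f (m * n) = f m * f n)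
    (S : Finset ℕ) (hS : ∀ p ∈ S, p.Prime) :
    ∏ p ∈ S, f p / p = f (∏ p ∈ S, p) / ((∏ p ∈ S, p : ℕ) : ℝ) := by
  have h1 : f (∏ p ∈ S, p) = ∏ p ∈ S, f p := by
    have := map_prod_primes f hf1 hmul S hS (fun _ => 1)
    simpa using this
  rw [h1, Nat.cast_prod, ← Finset.prod_div_distrib]

set_option maxHeartbeats 2000000 in
lemma lower_bound_aux (A B : ℝ) (hA : 0 < A) (x : ℝ) (f : ℕ → ℝ)
    (hx : 2 ≤ x)
    (hf0 : ∀ n, 0 ≤ f n) (hf1 : f 1 = 1)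
    (hmul : ∀ m n : ℕ, Nat.Coprime m n → f (m * n) = f m * f n)
    (hfA : ∀ p : ℕ, p.Prime → f p ≤ A) :
    Real.exp (-(A^2) - 4*A*(⌈4 * Real.exp 1 * A⌉₊ + 1 : ℕ)) / 2
      * Real.exp (∑ p ∈ primesUpTo x, f p / p)
      ≤ ∑ n ∈ Finset.Icc 1 ⌊x⌋₊, f n / n := by
  classical
  set k : ℕ := ⌈4 * Real.exp 1 * A⌉₊ + 1 with hk
  set M := ⌊x⌋₊ with hMdef
  have hM2 : 2 ≤ M := Nat.le_floor (by exact_mod_cast hx)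
  have hx1 : (1:ℝ) < x := by linarith
  have hx0 : (0:ℝ) < x := by linarith
  have hk1 : 1 ≤ (k:ℝ) := by
    have : 1 ≤ k := by omega
    exact_mod_cast this
  have hkpos : (0:ℝ) < k := by linarith
  set y : ℝ := x ^ ((k:ℝ)⁻¹) with hy
  have hy1 : 1 < y := Real.one_lt_rpow_iff_of_pos hx0 |>.mpr (Or.inl ⟨hx1, by positivity⟩)
  have hy0 : 0 < y := by linarith
  have hylex : y ≤ x := by
    calc y = x ^ ((k:ℝ)⁻¹) := rfl
      _ ≤ x ^ (1:ℝ) := by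
          apply Real.rpow_le_rpow_of_exponent_le (le_of_lt hx1)
          rw [inv_le_one_iff₀]; right; exact hk1
      _ = x := Real.rpow_one x
  have hlogy : Real.log y = (k:ℝ)⁻¹ * Real.log x := Real.log_rpow hx0 _
  have hlogypos : 0 < Real.log y := Real.log_pos hy1
  have hlogx : Real.log x = k * Real.log y := by
    rw [hlogy]; field_simp
  set ε : ℝ := (Real.log y)⁻¹ with hε
  have hεpos : 0 < ε := by positivity
  set Q := primesUpTo y with hQ
  have hQprime : ∀ p ∈ Q, p.Prime := fun p hp => (Finset.mem_filter.mp hp).2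
  have hQx : ∀ p ∈ Q, (p:ℝ) ≤ y := by
    intro p hp
    simp only [hQ, primesUpTo, Finset.mem_filter, Finset.mem_range] at hp
    have : p ≤ ⌊y⌋₊ := by omega
    calc (p:ℝ) ≤ (⌊y⌋₊ : ℝ) := by exact_mod_cast this
      _ ≤ y := Nat.floor_le (le_of_lt hy0)
  -- the three main sums
  set gQ : ℕ → ℝ := fun p => f p / p with hgQ
  have hgQ0 : ∀ p ∈ Q, 0 ≤ gQ p := by
    intro p hp
    have h1 := hf0 p
    have h2 : (0:ℝ) < p := by exact_mod_cast (hQprime p hp).pos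
    positivity
  have hgQA : ∀ p ∈ Q, gQ p ≤ A / p := by
    intro p hp
    have hpp := hQprime p hp
    have h2 : (0:ℝ) < p := by exact_mod_cast hpp.pos
    have h3 := hfA p hpp
    show f p / (p:ℝ) ≤ A / p
    gcongr
  have hQ2 : ∀ p ∈ Q, 2 ≤ p := fun p hp => (hQprime p hp).two_le
  -- powerset expansion
  have hexpand : ∏ p ∈ Q, (gQ p + 1) = ∑ S ∈ Q.powerset, ∏ p ∈ S, gQ p :=
    powerset_expansion f Q gQ
  set small := Q.powerset.filter (fun S => (∏ p ∈ S, p) ≤ M) with hsmalldef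
  set tail := Q.powerset.filter (fun S => ¬((∏ p ∈ S, p) ≤ M)) with htaildef
  have hsplitsum : ∑ S ∈ Q.powerset, ∏ p ∈ S, gQ p
      = ∑ S ∈ small, ∏ p ∈ S, gQ p + ∑ S ∈ tail, ∏ p ∈ S, gQ p :=
    (Finset.sum_filter_add_sum_filter_not _ _ _).symm
  have hSprime : ∀ S ∈ Q.powerset, ∀ p ∈ S, p.Prime := by
    intro S hS p hp
    exact hQprime p (Finset.mem_powerset.mp hS hp)
  have hterm_nonneg : ∀ S : Finset ℕ, S ∈ Q.powerset → 0 ≤ ∏ p ∈ S, gQ p := by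
    intro S hS
    apply Finset.prod_nonneg
    intro p hp
    exact hgQ0 p (Finset.mem_powerset.mp hS hp)
  -- (1) small part is at most the full harmonic sum
  have hsmall_le : ∑ S ∈ small, ∏ p ∈ S, gQ p ≤ ∑ n ∈ Finset.Icc 1 M, f n / n := by
    set G : ℕ → ℝ := fun n => f n / n with hG
    have hterm : ∀ S ∈ small, ∏ p ∈ S, gQ p = G (∏ p ∈ S, p) := by
      intro S hS
      have hS' : S ∈ Q.powerset := Finset.mem_filter.mp hS |>.1
      exact prod_primes_term f hf1 hmul S (hSprime S hS')
    rw [Finset.sum_congr rfl hterm]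
    have hinj : ∀ S ∈ small, ∀ T ∈ small, (∏ p ∈ S, p) = (∏ p ∈ T, p) → S = T := by
      intro S hS T hT he
      have hS' : S ∈ Q.powerset := Finset.mem_filter.mp hS |>.1
      have hT' : T ∈ Q.powerset := Finset.mem_filter.mp hT |>.1
      have e1 := Nat.primeFactors_prod (hSprime S hS')
      have e2 := Nat.primeFactors_prod (hSprime T hT')
      rw [← e1, ← e2, he]
    rw [← Finset.sum_image (g := fun S => ∏ p ∈ S, p) (f := G) hinj]
    apply Finset.sum_le_sum_of_subset_of_nonneg
    · intro n hn
      simp only [Finset.mem_image] at hn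
      obtain ⟨S, hS, rfl⟩ := hn
      have hS' : S ∈ Q.powerset := Finset.mem_filter.mp hS |>.1
      have hle : (∏ p ∈ S, p) ≤ M := (Finset.mem_filter.mp hS).2
      have hpos : 0 < ∏ p ∈ S, p := by
        apply Finset.prod_pos
        intro p hp
        exact (hSprime S hS' p hp).pos
      simp only [Finset.mem_Icc]
      omega
    · intro n _ _
      have := hf0 n
      have hn0 : (0:ℝ) ≤ n := Nat.cast_nonneg n
      rw [hG]
      positivity
  -- (2) tail bound via Rankin's trick
  set gε : ℕ → ℝ := fun p => gQ p * (p:ℝ) ^ ε with hgε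
  have hgε0 : ∀ p ∈ Q, 0 ≤ gε p := by
    intro p hp
    have h1 := hgQ0 p hp
    have h2 : (0:ℝ) ≤ (p:ℝ) ^ ε := Real.rpow_nonneg (Nat.cast_nonneg p) ε
    positivity
  have htail_le : ∑ S ∈ tail, ∏ p ∈ S, gQ p
      ≤ Real.exp (4 * A * Real.exp 1 - k) * ∏ p ∈ Q, (gQ p + 1) := by
    have h2a : ∀ S ∈ tail, ∏ p ∈ S, gQ p ≤ Real.exp (-(k:ℝ)) * ∏ p ∈ S, gε p := by
      intro S hS
      have hS' : S ∈ Q.powerset := Finset.mem_filter.mp hS |>.1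
      have hgt : ¬((∏ p ∈ S, p) ≤ M) := (Finset.mem_filter.mp hS).2
      set n : ℕ := ∏ p ∈ S, p with hn
      have hxn : x ≤ (n:ℝ) := by
        have h1 : M + 1 ≤ n := by omega
        have h2 : x < (M:ℝ) + 1 := by
          rw [hMdef]; exact Nat.lt_floor_add_one x
        have h3 : ((M:ℝ) + 1) ≤ (n:ℝ) := by exact_mod_cast h1
        linarith
      have hxe : Real.exp (k:ℝ) = x ^ ε := by
        rw [Real.rpow_def_of_pos hx0]
        congr 1
        rw [hlogx, hε]
        field_simp
      have hne : x ^ ε ≤ (n:ℝ) ^ ε :=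
        Real.rpow_le_rpow hx0.le hxn hεpos.le
      have hprodS : (n:ℝ) ^ ε * ∏ p ∈ S, gQ p = ∏ p ∈ S, gε p := by
        have hcast : (n:ℝ) = ∏ p ∈ S, (p:ℝ) := by
          rw [hn]; push_cast; rfl
        rw [hcast, ← Real.finset_prod_rpow S _ (fun p _ => Nat.cast_nonneg p) ε,
          ← Finset.prod_mul_distrib]
        apply Finset.prod_congr rfl
        intro p _
        rw [hgε]
        ring
      have hSnn : 0 ≤ ∏ p ∈ S, gQ p := hterm_nonneg S hS'
      calc ∏ p ∈ S, gQ p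
          = Real.exp (-(k:ℝ)) * (Real.exp (k:ℝ) * ∏ p ∈ S, gQ p) := by
            rw [← mul_assoc, ← Real.exp_add]
            simp
        _ ≤ Real.exp (-(k:ℝ)) * ((n:ℝ) ^ ε * ∏ p ∈ S, gQ p) := by
            apply mul_le_mul_of_nonneg_left _ (Real.exp_pos _).le
            apply mul_le_mul_of_nonneg_right _ hSnn
            rw [hxe]
            exact hne
        _ = Real.exp (-(k:ℝ)) * ∏ p ∈ S, gε p := by rw [hprodS]
    have h2b : ∑ S ∈ tail, ∏ p ∈ S, gε p ≤ ∏ p ∈ Q, (gε p + 1) := by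
      rw [powerset_expansion f Q gε]
      apply Finset.sum_le_sum_of_subset_of_nonneg (Finset.filter_subset _ _)
      intro S hS _
      apply Finset.prod_nonneg
      intro p hp
      exact hgε0 p (Finset.mem_powerset.mp hS hp)
    have h2c : ∏ p ∈ Q, (gε p + 1)
        ≤ Real.exp (4 * A * Real.exp 1) * ∏ p ∈ Q, (gQ p + 1) := by
      have hper : ∀ p ∈ Q, gε p + 1
          ≤ (gQ p + 1) * Real.exp (A * Real.exp 1 * ε * (Real.log p / p)) := by
        intro p hp
        have hpp := hQprime p hp
        have hp0 : (0:ℝ) < p := by exact_mod_cast hpp.pos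
        have hlogp0 : 0 ≤ Real.log p := Real.log_natCast_nonneg p
        set t : ℝ := ε * Real.log p with ht
        have ht0 : 0 ≤ t := by positivity
        have ht1 : t ≤ 1 := by
          rw [ht]
          have h1 : Real.log p ≤ Real.log y :=
            Real.log_le_log hp0 (hQx p hp)
          calc ε * Real.log p ≤ ε * Real.log y := by
                apply mul_le_mul_of_nonneg_left h1 hεpos.le
            _ = 1 := by rw [hε]; field_simp
        have hpe : (p:ℝ) ^ ε = Real.exp t := by
          rw [Real.rpow_def_of_pos hp0, ht]
          ring_nf
        have hsub : (p:ℝ) ^ ε - 1 ≤ t * Real.exp 1 := by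
          rw [hpe]
          exact exp_sub_one_le' ht0 ht1
        have hgp0 := hgQ0 p hp
        have hgpA := hgQA p hp
        have hpε1 : (1:ℝ) ≤ (p:ℝ) ^ ε :=
          Real.one_le_rpow (by exact_mod_cast hpp.one_le) hεpos.le
        have key1 : gε p + 1 = (gQ p + 1) + gQ p * ((p:ℝ)^ε - 1) := by
          rw [hgε]; ring
        have key2 : gQ p * ((p:ℝ)^ε - 1) ≤ (A / p) * (t * Real.exp 1) := by
          apply mul_le_mul hgpA hsub (by linarith) (by positivity)
        have key3 : (A / p) * (t * Real.exp 1) = A * Real.exp 1 * ε * (Real.log p / p) := by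
          rw [ht]; field_simp
        have key4 : 0 ≤ A * Real.exp 1 * ε * (Real.log p / p) := by positivity
        have key5 : (gQ p + 1) + A * Real.exp 1 * ε * (Real.log p / p)
            ≤ (gQ p + 1) * (1 + A * Real.exp 1 * ε * (Real.log p / p)) := by
          nlinarith
        have key6 : 1 + A * Real.exp 1 * ε * (Real.log p / p)
            ≤ Real.exp (A * Real.exp 1 * ε * (Real.log p / p)) := by
          have := Real.add_one_le_exp (A * Real.exp 1 * ε * (Real.log p / p))
          linarith
        calc gε p + 1 = (gQ p + 1) + gQ p * ((p:ℝ)^ε - 1) := key1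
          _ ≤ (gQ p + 1) + A * Real.exp 1 * ε * (Real.log p / p) := by
              rw [← key3] at *
              linarith [key2]
          _ ≤ (gQ p + 1) * (1 + A * Real.exp 1 * ε * (Real.log p / p)) := key5
          _ ≤ (gQ p + 1) * Real.exp (A * Real.exp 1 * ε * (Real.log p / p)) := by
              apply mul_le_mul_of_nonneg_left key6 (by linarith)
      calc ∏ p ∈ Q, (gε p + 1)
          ≤ ∏ p ∈ Q, ((gQ p + 1) * Real.exp (A * Real.exp 1 * ε * (Real.log p / p))) := by
            apply Finset.prod_le_prod _ hper
            intro p hp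
            have := hgε0 p hp
            linarith
        _ = (∏ p ∈ Q, (gQ p + 1)) * Real.exp (∑ p ∈ Q, A * Real.exp 1 * ε * (Real.log p / p)) := by
            rw [Finset.prod_mul_distrib, Real.exp_sum]
        _ ≤ (∏ p ∈ Q, (gQ p + 1)) * Real.exp (4 * A * Real.exp 1) := by
            apply mul_le_mul_of_nonneg_left
            · apply Real.exp_le_exp.mpr
              rw [← Finset.mul_sum]
              have hmert : ∑ p ∈ Q, Real.log p / p ≤ 4 * Real.log y := by
                have hfl1 : 1 ≤ ⌊y⌋₊ := Nat.le_floor (by exact_mod_cast hy1.le)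
                have h1 := mertens_le ⌊y⌋₊ hfl1
                have h2 : Real.log ⌊y⌋₊ ≤ Real.log y := by
                  apply Real.log_le_log (by exact_mod_cast hfl1)
                  exact Nat.floor_le hy0.le
                calc ∑ p ∈ Q, Real.log p / p
                    = ∑ p ∈ (Finset.range (⌊y⌋₊+1)).filter Nat.Prime, Real.log p / p := rfl
                  _ ≤ 4 * Real.log ⌊y⌋₊ := h1
                  _ ≤ 4 * Real.log y := by linarith
              calc A * Real.exp 1 * ε * ∑ p ∈ Q, Real.log p / p
                  ≤ A * Real.exp 1 * ε * (4 * Real.log y) := by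
                    apply mul_le_mul_of_nonneg_left hmert (by positivity)
                _ = 4 * A * Real.exp 1 := by
                    rw [hε]
                    field_simp
            · apply Finset.prod_nonneg
              intro p hp
              have := hgQ0 p hp
              linarith
        _ = Real.exp (4 * A * Real.exp 1) * ∏ p ∈ Q, (gQ p + 1) := by ring
    calc ∑ S ∈ tail, ∏ p ∈ S, gQ p
        ≤ ∑ S ∈ tail, Real.exp (-(k:ℝ)) * ∏ p ∈ S, gε p := Finset.sum_le_sum h2a
      _ = Real.exp (-(k:ℝ)) * ∑ S ∈ tail, ∏ p ∈ S, gε p := by rw [Finset.mul_sum]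
      _ ≤ Real.exp (-(k:ℝ)) * ∏ p ∈ Q, (gε p + 1) := by
          apply mul_le_mul_of_nonneg_left h2b (Real.exp_pos _).le
      _ ≤ Real.exp (-(k:ℝ)) * (Real.exp (4 * A * Real.exp 1) * ∏ p ∈ Q, (gQ p + 1)) := by
          apply mul_le_mul_of_nonneg_left h2c (Real.exp_pos _).le
      _ = Real.exp (4 * A * Real.exp 1 - k) * ∏ p ∈ Q, (gQ p + 1) := by
          rw [← mul_assoc, ← Real.exp_add]
          congr 2
          ring
  -- (3) the tail is at most half of the product
  have hprod_pos : 0 < ∏ p ∈ Q, (gQ p + 1) := by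
    apply Finset.prod_pos
    intro p hp
    have := hgQ0 p hp
    linarith
  have hhalf : Real.exp (4 * A * Real.exp 1 - k) ≤ 1/2 := by
    have hkge : 4 * Real.exp 1 * A + 1 ≤ (k:ℝ) := by
      rw [hk]
      push_cast
      have := Nat.le_ceil (4 * Real.exp 1 * A)
      linarith
    have h1 : 4 * A * Real.exp 1 - k ≤ -1 := by nlinarith
    calc Real.exp (4 * A * Real.exp 1 - k) ≤ Real.exp (-1) := Real.exp_le_exp.mpr h1
      _ ≤ 1/2 := by
        rw [Real.exp_neg]
        have h2 : (2:ℝ) ≤ Real.exp 1 := by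
          have := Real.add_one_le_exp 1
          linarith
        rw [inv_le_comm₀ (Real.exp_pos 1) (by norm_num)]
        norm_num
        linarith
  -- (3) the small part is at least half the product
  have hsmall_ge : (1/2) * ∏ p ∈ Q, (gQ p + 1) ≤ ∑ S ∈ small, ∏ p ∈ S, gQ p := by
    have h1 : ∑ S ∈ tail, ∏ p ∈ S, gQ p ≤ (1/2) * ∏ p ∈ Q, (gQ p + 1) := by
      refine htail_le.trans ?_
      exact mul_le_mul_of_nonneg_right hhalf hprod_pos.le
    have h2 := hexpand
    rw [hsplitsum] at h2
    linarith
  -- (4) the product dominates exp of the prime sum up to y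
  have hprod_exp : Real.exp (-(A^2)) * Real.exp (∑ p ∈ Q, gQ p) ≤ ∏ p ∈ Q, (gQ p + 1) := by
    have h1 : Real.exp (∑ p ∈ Q, gQ p) ≤ (∏ p ∈ Q, (gQ p + 1)) * Real.exp (A^2) := by
      rw [Real.exp_sum]
      calc ∏ p ∈ Q, Real.exp (gQ p)
          ≤ ∏ p ∈ Q, ((1 + gQ p) * Real.exp ((gQ p)^2)) := by
            apply Finset.prod_le_prod (fun p _ => (Real.exp_pos _).le)
            intro p hp
            exact exp_le_one_add_mul_exp_sq (hgQ0 p hp)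
        _ = (∏ p ∈ Q, (1 + gQ p)) * Real.exp (∑ p ∈ Q, (gQ p)^2) := by
            rw [Finset.prod_mul_distrib, Real.exp_sum]
        _ ≤ (∏ p ∈ Q, (gQ p + 1)) * Real.exp (A^2) := by
            have he : ∏ p ∈ Q, (1 + gQ p) = ∏ p ∈ Q, (gQ p + 1) := by
              apply Finset.prod_congr rfl; intro p _; ring
            rw [he]
            apply mul_le_mul_of_nonneg_left _ hprod_pos.le
            apply Real.exp_le_exp.mpr
            have hsq : ∀ p ∈ Q, (gQ p)^2 ≤ A^2 * ((p:ℝ)⁻¹)^2 := by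
              intro p hp
              have h2 := hgQA p hp
              have h3 := hgQ0 p hp
              have hp0 : (0:ℝ) < p := by exact_mod_cast (hQprime p hp).pos
              have h4 : A / p = A * (p:ℝ)⁻¹ := by ring
              nlinarith [sq_nonneg ((p:ℝ)⁻¹)]
            calc ∑ p ∈ Q, (gQ p)^2 ≤ ∑ p ∈ Q, A^2 * ((p:ℝ)⁻¹)^2 := Finset.sum_le_sum hsq
              _ = A^2 * ∑ p ∈ Q, ((p:ℝ)⁻¹)^2 := by rw [Finset.mul_sum]
              _ ≤ A^2 * 1 := by
                  apply mul_le_mul_of_nonneg_left (invsq_finset hQ2) (by positivity)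
              _ = A^2 := by ring
    have h5 := mul_le_mul_of_nonneg_right h1 (Real.exp_pos (-(A^2))).le
    have h6 : Real.exp (A^2) * Real.exp (-(A^2)) = 1 := by
      rw [← Real.exp_add]; simp
    calc Real.exp (-(A^2)) * Real.exp (∑ p ∈ Q, gQ p)
        = Real.exp (∑ p ∈ Q, gQ p) * Real.exp (-(A^2)) := by ring
      _ ≤ (∏ p ∈ Q, (gQ p + 1)) * Real.exp (A^2) * Real.exp (-(A^2)) := h5
      _ = ∏ p ∈ Q, (gQ p + 1) := by
          rw [mul_assoc, h6, mul_one]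
  -- (6) comparing the prime sums up to x and up to y
  have hMfcomp : ∑ p ∈ primesUpTo x, f p / p ≤ (∑ p ∈ Q, gQ p) + 4*A*k := by
    set Px := primesUpTo x with hPx
    have hsub : Q ⊆ Px := by
      intro p hp
      simp only [hQ, hPx, primesUpTo, Finset.mem_filter, Finset.mem_range] at hp ⊢
      refine ⟨?_, hp.2⟩
      have := Nat.floor_le_floor hylex
      omega
    have hsplit2 : ∑ p ∈ Px, gQ p = ∑ p ∈ Px \ Q, gQ p + ∑ p ∈ Q, gQ p :=
      (Finset.sum_sdiff hsub).symm
    have hdiff : ∑ p ∈ Px \ Q, gQ p ≤ 4*A*k := by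
      have hstep : ∀ p ∈ Px \ Q, gQ p ≤ (A / Real.log y) * (Real.log p / p) := by
        intro p hp
        obtain ⟨hp1, hp2⟩ := Finset.mem_sdiff.mp hp
        have hpp : p.Prime := (Finset.mem_filter.mp hp1).2
        have hp0 : (0:ℝ) < p := by exact_mod_cast hpp.pos
        have hpy : y < p := by
          have hnot : ¬ (p < ⌊y⌋₊ + 1) := by
            intro hcon
            exact hp2 (by
              simp only [hQ, primesUpTo, Finset.mem_filter, Finset.mem_range]
              exact ⟨hcon, hpp⟩)
          have h5 : ⌊y⌋₊ + 1 ≤ p := by omega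
          have h6 : y < (⌊y⌋₊:ℝ) + 1 := Nat.lt_floor_add_one y
          have h7 : ((⌊y⌋₊:ℝ) + 1) ≤ p := by exact_mod_cast h5
          linarith
        have hlogp : Real.log y ≤ Real.log p := Real.log_le_log hy0 hpy.le
        have hfp := hfA p hpp
        have hf0p := hf0 p
        calc gQ p ≤ A / p := by
              show f p / (p:ℝ) ≤ A / p
              gcongr
          _ = (A / Real.log y) * (Real.log y / p) := by
              field_simp
          _ ≤ (A / Real.log y) * (Real.log p / p) := by
              apply mul_le_mul_of_nonneg_left _ (div_pos hA hlogypos).le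
              gcongr
      calc ∑ p ∈ Px \ Q, gQ p
          ≤ ∑ p ∈ Px \ Q, (A / Real.log y) * (Real.log p / p) := Finset.sum_le_sum hstep
        _ = (A / Real.log y) * ∑ p ∈ Px \ Q, Real.log p / p := by rw [Finset.mul_sum]
        _ ≤ (A / Real.log y) * ∑ p ∈ Px, Real.log p / p := by
            apply mul_le_mul_of_nonneg_left _ (div_pos hA hlogypos).le
            apply Finset.sum_le_sum_of_subset_of_nonneg Finset.sdiff_subset
            intro p hp _
            have hpp : p.Prime := (Finset.mem_filter.mp hp).2
            have hp0 : (0:ℝ) < p := by exact_mod_cast hpp.pos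
            have := Real.log_natCast_nonneg p
            positivity
        _ ≤ (A / Real.log y) * (4 * Real.log x) := by
            apply mul_le_mul_of_nonneg_left _ (div_pos hA hlogypos).le
            have hm := mertens_le M (by omega)
            have hlogM : Real.log M ≤ Real.log x := by
              apply Real.log_le_log
              · have : 0 < M := by omega
                exact_mod_cast this
              · exact Nat.floor_le hx0.le
            calc ∑ p ∈ Px, Real.log p / p
                = ∑ p ∈ (Finset.range (M+1)).filter Nat.Prime, Real.log p / p := rfl
              _ ≤ 4 * Real.log M := hm
              _ ≤ 4 * Real.log x := by linarith
        _ = 4*A*k := by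
            rw [hlogx]
            have hly : Real.log y ≠ 0 := ne_of_gt hlogypos
            field_simp
    calc ∑ p ∈ Px, f p / p = ∑ p ∈ Px, gQ p := rfl
      _ = ∑ p ∈ Px \ Q, gQ p + ∑ p ∈ Q, gQ p := hsplit2
      _ ≤ (∑ p ∈ Q, gQ p) + 4*A*k := by linarith
  -- (7) final assembly
  have hfinal1 : Real.exp (∑ p ∈ primesUpTo x, f p / p)
      ≤ Real.exp (4*A*k) * Real.exp (∑ p ∈ Q, gQ p) := by
    rw [← Real.exp_add]
    apply Real.exp_le_exp.mpr
    linarith [hMfcomp]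
  have e1 : Real.exp (-(A^2) - 4*A*(k:ℝ)) / 2 * Real.exp (∑ p ∈ primesUpTo x, f p / p)
      ≤ Real.exp (-(A^2) - 4*A*(k:ℝ)) / 2 * (Real.exp (4*A*k) * Real.exp (∑ p ∈ Q, gQ p)) := by
    apply mul_le_mul_of_nonneg_left hfinal1 (by positivity)
  have h3 : Real.exp (-(A^2) - 4*A*(k:ℝ)) * Real.exp (4*A*(k:ℝ)) = Real.exp (-(A^2)) := by
    rw [← Real.exp_add]; congr 1; ring
  have e2 : Real.exp (-(A^2) - 4*A*(k:ℝ)) / 2 * (Real.exp (4*A*k) * Real.exp (∑ p ∈ Q, gQ p))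
      = (1/2) * (Real.exp (-(A^2)) * Real.exp (∑ p ∈ Q, gQ p)) := by
    calc Real.exp (-(A^2) - 4*A*(k:ℝ)) / 2 * (Real.exp (4*A*k) * Real.exp (∑ p ∈ Q, gQ p))
        = (Real.exp (-(A^2) - 4*A*(k:ℝ)) * Real.exp (4*A*(k:ℝ))) * Real.exp (∑ p ∈ Q, gQ p) / 2 := by
          ring
      _ = (1/2) * (Real.exp (-(A^2)) * Real.exp (∑ p ∈ Q, gQ p)) := by
          rw [h3]; ring
  have e3 : (1/2) * (Real.exp (-(A^2)) * Real.exp (∑ p ∈ Q, gQ p))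
      ≤ (1/2) * ∏ p ∈ Q, (gQ p + 1) :=
    mul_le_mul_of_nonneg_left hprod_exp (by norm_num)
  calc Real.exp (-(A^2) - 4*A*(k:ℝ)) / 2 * Real.exp (∑ p ∈ primesUpTo x, f p / p)
      ≤ (1/2) * (Real.exp (-(A^2)) * Real.exp (∑ p ∈ Q, gQ p)) := by
        rw [← e2]; exact e1
    _ ≤ (1/2) * ∏ p ∈ Q, (gQ p + 1) := e3
    _ ≤ ∑ S ∈ small, ∏ p ∈ S, gQ p := hsmall_ge
    _ ≤ ∑ n ∈ Finset.Icc 1 M, f n / n := hsmall_le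



/-- **Lemma 2.1 (harmonic means of nonnegative multiplicative functions).**
If `f ≥ 0` is multiplicative, `f(p) ≤ A` on primes and
`∑_p ∑_{ℓ ≥ 2} f(p^ℓ)/p^ℓ ≤ B`, then `∑_{n ≤ x} f(n)/n ≍_{A,B} exp(∑_{p ≤ x} f(p)/p)`. -/
theorem harmonic_mean_multiplicative (A B : ℝ) (hA : 0 < A) (hB : 0 < B) :
    ∃ K₁ K₂ : ℝ, 0 < K₁ ∧ K₁ ≤ K₂ ∧
      ∀ (x : ℝ) (f : ℕ → ℝ),
        2 ≤ x →
        (∀ n, 0 ≤ f n) → f 1 = 1 →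
        (∀ m n : ℕ, Nat.Coprime m n → f (m * n) = f m * f n) →
        (∀ p : ℕ, p.Prime → f p ≤ A) →
        (∀ P L : ℕ, ∑ p ∈ (Finset.range P).filter Nat.Prime,
            ∑ ℓ ∈ Finset.Icc 2 L, f (p ^ ℓ) / (p : ℝ) ^ ℓ ≤ B) →
        K₁ * Real.exp (Mf f x) ≤ ∑ n ∈ Finset.Icc 1 ⌊x⌋₊, f n / n ∧
          ∑ n ∈ Finset.Icc 1 ⌊x⌋₊, f n / n ≤ K₂ * Real.exp (Mf f x) := by
  refine ⟨Real.exp (-(A^2) - 4*A*((⌈4 * Real.exp 1 * A⌉₊ + 1 : ℕ) : ℝ)) / 2,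
    Real.exp B, by positivity, ?_, ?_⟩
  · have hk1 : (1:ℝ) ≤ ((⌈4 * Real.exp 1 * A⌉₊ + 1 : ℕ) : ℝ) := by
      have : 1 ≤ (⌈4 * Real.exp 1 * A⌉₊ + 1 : ℕ) := by omega
      exact_mod_cast this
    have h1 : -(A^2) - 4*A*((⌈4 * Real.exp 1 * A⌉₊ + 1 : ℕ) : ℝ) ≤ 0 := by nlinarith
    have h2 : Real.exp (-(A^2) - 4*A*((⌈4 * Real.exp 1 * A⌉₊ + 1 : ℕ) : ℝ)) ≤ 1 :=
      Real.exp_le_one_iff.mpr h1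
    have h3 : (1:ℝ) ≤ Real.exp B := Real.one_le_exp hB.le
    linarith
  · intro x f hx hf0 hf1 hmul hfA htail
    constructor
    · have h := lower_bound_aux A B hA x f hx hf0 hf1 hmul hfA
      simpa only [Mf] using h
    · have h := upper_bound_aux A B x f hx hf0 hf1 hmul htail
      simp only [Mf]
      linarith

end
end

section
/- Let x ≥ 2 and α, C₁, C₂ > 0. Let E be a set of primes and g ∈ {ω(·,E), Ω(·,E)}. Suppose f:ℕ→ℝ_{≥0} is a multiplicative function such that ∑_{p∈E, ℓ≥2} f(p^ℓ)/p^ℓ ≤ C₁ and ∑_{p∉E, ℓ≥2} f(p^ℓ)/p^ℓ + 1_{g=Ω}·∑_{p∈E, ℓ≥2} f(p^ℓ)·α^ℓ/p^ℓ ≤ C₂. Then there exists a constant K depending only on C₂ such that ∑_{n≤x, g(n,E)=k} f(n)/n ≤ K·(M_f(x,E)+C₁)^k/k! · e^{M_f(x,E^c)} for all integers k ≥ 0 when g = ω, and for all integers 0 ≤ k ≤ α·M_f(x,E) when g = Ω. -/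
open scoped Classical

noncomputable section
open Finset

section Helpers

/-- General injection comparison. -/
lemma sum_le_sum_inj {β γ : Type*} {s : Finset β} {t : Finset γ} (Φ : β → γ)
    (hmaps : ∀ i ∈ s, Φ i ∈ t) (hinj : ∀ i ∈ s, ∀ j ∈ s, Φ i = Φ j → i = j)
    (F : β → ℝ) (G : γ → ℝ) (hFG : ∀ i ∈ s, F i = G (Φ i)) (hG : ∀ j ∈ t, 0 ≤ G j) :
    ∑ i ∈ s, F i ≤ ∑ j ∈ t, G j := by
  classical
  calc ∑ i ∈ s, F i = ∑ i ∈ s, G (Φ i) := Finset.sum_congr rfl hFG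
    _ = ∑ j ∈ s.image Φ, G j := (Finset.sum_image (fun i hi j hj h => hinj i hi j hj h)).symm
    _ ≤ ∑ j ∈ t, G j := Finset.sum_le_sum_of_subset_of_nonneg
        (Finset.image_subset_iff.mpr hmaps) (fun j hj _ => hG j hj)

/-- factorization of a product of prime powers. -/
lemma fact_prod_pow {s : Finset ℕ} (hs : ∀ p ∈ s, p.Prime) (e : ℕ → ℕ)
    (he : ∀ p ∈ s, e p ≠ 0) (q : ℕ) :
    (∏ p ∈ s, p ^ e p).factorization q = if q ∈ s then e q else 0 := by
  classical
  have hne : ∀ p ∈ s, p ^ e p ≠ 0 := fun p hp => pow_ne_zero _ (hs p hp).pos.ne'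
  rw [Nat.factorization_prod hne]
  rw [Finsupp.finset_sum_apply]
  by_cases hq : q ∈ s
  · rw [Finset.sum_eq_single q]
    · simp [(hs q hq).factorization_pow, hq]
    · intro p hp hpq
      rw [(hs p hp).factorization_pow]
      simp [Finsupp.single_apply, hpq]
    · intro h; exact absurd hq h
  · simp only [hq, if_false]
    apply Finset.sum_eq_zero
    intro p hp
    rw [(hs p hp).factorization_pow, Finsupp.single_apply, if_neg]
    rintro rfl; exact hq hp

lemma prod_pow_ne_zero {s : Finset ℕ} (hs : ∀ p ∈ s, p.Prime) (e : ℕ → ℕ) :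
    (∏ p ∈ s, p ^ e p) ≠ 0 :=
  Finset.prod_ne_zero_iff.mpr (fun p hp => pow_ne_zero _ (hs p hp).pos.ne')

lemma primeFactors_prod_pow {s : Finset ℕ} (hs : ∀ p ∈ s, p.Prime) (e : ℕ → ℕ)
    (he : ∀ p ∈ s, e p ≠ 0) :
    (∏ p ∈ s, p ^ e p).primeFactors = s := by
  classical
  ext q
  rw [← Nat.support_factorization, Finsupp.mem_support_iff, fact_prod_pow hs e he]
  by_cases hq : q ∈ s <;> simp [hq, he]

/-- multiplicative function on a product of powers of distinct primes -/
lemma mult_prod_pow {f : ℕ → ℝ} (hf1 : f 1 = 1)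
    (hfm : ∀ m n : ℕ, Nat.Coprime m n → f (m * n) = f m * f n)
    {s : Finset ℕ} (hs : ∀ p ∈ s, p.Prime) (e : ℕ → ℕ) :
    f (∏ p ∈ s, p ^ e p) = ∏ p ∈ s, f (p ^ e p) := by
  classical
  induction s using Finset.induction with
  | empty => simpa using hf1
  | insert a s ha ih =>
    have hsp : ∀ p ∈ s, p.Prime := fun p hp => hs p (Finset.mem_insert_of_mem hp)
    have hap : a.Prime := hs a (Finset.mem_insert_self a s)
    have hcop : Nat.Coprime (a ^ e a) (∏ p ∈ s, p ^ e p) := by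
      apply Nat.Coprime.pow_left
      apply Nat.Coprime.prod_right
      intro p hp
      exact Nat.Coprime.pow_right _ ((Nat.coprime_primes hap (hsp p hp)).mpr
        (by rintro rfl; exact ha hp))
    rw [Finset.prod_insert ha, Finset.prod_insert ha, hfm _ _ hcop, ih hsp]

/-- reconstruction -/
lemma recon {c : ℕ} (hc : c ≠ 0) {A : Finset ℕ} (hA : c.primeFactors ⊆ A) :
    c = ∏ p ∈ A, p ^ c.factorization p := by
  classical
  have h1 : c.factorization.prod (fun p k => p ^ k) = c := Nat.factorization_prod_pow_eq_self hc
  have h2 : ∏ p ∈ c.primeFactors, p ^ c.factorization p = ∏ p ∈ A, p ^ c.factorization p := by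
    apply Finset.prod_subset hA
    intro p _ hp
    rw [Finsupp.notMem_support_iff.mp (by rwa [Nat.support_factorization]), pow_zero]
  rw [← h2]
  conv_lhs => rw [← h1]
  rfl



lemma bigOmega_pow {p : ℕ} (hp : p.Prime) (ℓ : ℕ) : bigOmega (p ^ ℓ) = ℓ := by
  rw [bigOmega, hp.primeFactorsList_pow, List.length_replicate]

lemma bigOmega_mul {m n : ℕ} (hm : m ≠ 0) (hn : n ≠ 0) :
    bigOmega (m * n) = bigOmega m + bigOmega n := by
  rw [bigOmega, bigOmega, bigOmega, ← List.length_append]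
  exact (Nat.perm_primeFactorsList_mul hm hn).length_eq

lemma bigOmega_eq_sum {c : ℕ} (hc : c ≠ 0) :
    bigOmega c = ∑ p ∈ c.primeFactors, c.factorization p := by
  rw [bigOmega]
  have : ∀ p, c.factorization p = c.primeFactorsList.count p := by
    intro p; rw [← Nat.primeFactorsList_count_eq]
  simp_rw [this]
  rw [Nat.primeFactors]
  have := (Multiset.toFinset_sum_count_eq (c.primeFactorsList : Multiset ℕ)).symm
  simpa using this

/-- k! ≤ (k-e)! * k^e for e ≤ k -/
lemma factorial_le_sub_mul_pow {k e : ℕ} (he : e ≤ k) :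
    k.factorial ≤ (k - e).factorial * k ^ e := by
  induction e with
  | zero => simp
  | succ e ih =>
    have he' : e ≤ k := Nat.le_of_succ_le he
    calc k.factorial ≤ (k - e).factorial * k ^ e := ih he'
      _ ≤ ((k - (e+1)).factorial * k) * k ^ e := by
          gcongr
          have h1 : k - e = (k - (e+1)) + 1 := by omega
          rw [h1, Nat.factorial_succ]
          have : (k - (e+1)) + 1 ≤ k := by omega
          calc (k - (e+1) + 1) * (k - (e+1)).factorial
              ≤ k * (k - (e+1)).factorial := Nat.mul_le_mul_right _ this
            _ = (k - (e+1)).factorial * k := Nat.mul_comm _ _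
      _ = (k - (e+1)).factorial * k ^ (e+1) := by ring
section
variable {w : ℕ → ℝ}

/-- Core fiber bound: sum of `w c` over `c ≤ N` with prime factors exactly `A`,
all exponents in `[m, N]`. -/
lemma core_fiber (hw0 : ∀ n, 0 ≤ w n) (hw1 : w 1 = 1)
    (hwm : ∀ a b : ℕ, Nat.Coprime a b → w (a * b) = w a * w b)
    (N m : ℕ) (hm : 1 ≤ m) (A : Finset ℕ) (hA : ∀ p ∈ A, p.Prime) :
    ∑ c ∈ (Finset.Icc 1 N).filter
        (fun c => c.primeFactors = A ∧ ∀ p, c.factorization p = 0 ∨ m ≤ c.factorization p), w c ≤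
      ∏ p ∈ A, ∑ ℓ ∈ Finset.Icc m N, w (p ^ ℓ) := by
  classical
  rw [Finset.prod_sum]
  apply sum_le_sum_inj (fun c => fun p (_ : p ∈ A) => c.factorization p)
  · intro c hc
    simp only [Finset.mem_filter, Finset.mem_Icc] at hc
    obtain ⟨⟨hc1, hcN⟩, hPF, hexp⟩ := hc
    rw [Finset.mem_pi]
    intro p hp
    rw [Finset.mem_Icc]
    constructor
    · rcases hexp p with h | h
      · exfalso
        have : p ∈ c.primeFactors := hPF ▸ hp
        rw [← Nat.support_factorization, Finsupp.mem_support_iff] at this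
        exact this h
      · exact h
    · have hc0 : c ≠ 0 := by omega
      exact le_trans (Nat.factorization_lt p hc0).le hcN
  · intro c hc c' hc' h
    simp only [Finset.mem_filter, Finset.mem_Icc] at hc hc'
    have hc0 : c ≠ 0 := by omega
    have hc0' : c' ≠ 0 := by omega
    rw [recon hc0 (le_of_eq hc.2.1), recon hc0' (le_of_eq hc'.2.1)]
    apply Finset.prod_congr rfl
    intro p hp
    have := congrFun (congrFun h p) hp
    rw [this]
  · intro c hc
    simp only [Finset.mem_filter, Finset.mem_Icc] at hc
    have hc0 : c ≠ 0 := by omega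
    calc w c = w (∏ p ∈ A, p ^ c.factorization p) := by rw [← recon hc0 (le_of_eq hc.2.1)]
      _ = ∏ p ∈ A, w (p ^ c.factorization p) := mult_prod_pow hw1 hwm hA _
      _ = ∏ x ∈ A.attach, w (x.1 ^ c.factorization x.1) := (Finset.prod_attach A _).symm
  · intro g _
    exact Finset.prod_nonneg fun x _ => hw0 _

end
lemma two_term_binomial {a b : ℝ} (ha : 0 ≤ a) (hb : 0 ≤ b) (s : ℕ) :
    a ^ (s + 1) + (s + 1 : ℝ) * a ^ s * b ≤ (a + b) ^ (s + 1) := by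
  induction s with
  | zero => simp [pow_succ]
  | succ s ih =>
    have hpow : (0:ℝ) ≤ a ^ s := pow_nonneg ha s
    have hps : a ^ (s+1) = a ^ s * a := pow_succ a s
    have hps2 : a ^ (s+1+1) = a ^ (s+1) * a := pow_succ a (s+1)
    push_cast
    calc a ^ (s + 1 + 1) + ((s:ℝ) + 1 + 1) * a ^ (s+1) * b
        ≤ (a + b) * (a ^ (s + 1) + ((s:ℝ) + 1) * a ^ s * b) := by
          have expand : (a + b) * (a ^ (s+1) + ((s:ℝ)+1)*a^s*b)
              = a^(s+1)*a + ((s:ℝ)+1+1)*a^(s+1)*b + ((s:ℝ)+1)*(a^s*b*b) := by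
            rw [hps]; ring
          have hnn : (0:ℝ) ≤ ((s:ℝ)+1)*(a^s*b*b) :=
            mul_nonneg (by positivity) (mul_nonneg (mul_nonneg hpow hb) hb)
          linarith [expand, hps2]
      _ ≤ (a + b) * (a + b) ^ (s + 1) := by
          apply mul_le_mul_of_nonneg_left ih (by linarith)
      _ = (a + b) ^ (s + 1 + 1) := by ring

lemma esymm_le {u : ℕ → ℝ} {Q : Finset ℕ} (hu : ∀ p ∈ Q, 0 ≤ u p) (s : ℕ) :
    (s.factorial : ℝ) * ∑ A ∈ Q.powersetCard s, ∏ p ∈ A, u p ≤ (∑ p ∈ Q, u p) ^ s := by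
  classical
  induction Q using Finset.induction generalizing s with
  | empty =>
    cases s with
    | zero => simp
    | succ s =>
      have : Finset.powersetCard (s+1) (∅ : Finset ℕ) = ∅ := by
        ext A
        simp [Finset.mem_powersetCard, Finset.subset_empty]
        rintro rfl; simp
      simp [this]
  | insert x Q hx ih =>
    have hu' : ∀ p ∈ Q, 0 ≤ u p := fun p hp => hu p (Finset.mem_insert_of_mem hp)
    have hux : 0 ≤ u x := hu x (Finset.mem_insert_self x Q)
    have ha : 0 ≤ ∑ p ∈ Q, u p := Finset.sum_nonneg hu'
    cases s with
    | zero => simp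
    | succ s =>
      rw [Finset.powersetCard_succ_insert hx]
      have hdisj : Disjoint (Q.powersetCard (s+1)) ((Q.powersetCard s).image (insert x)) := by
        rw [Finset.disjoint_left]
        intro A hA hA'
        rw [Finset.mem_powersetCard] at hA
        obtain ⟨B, hB, rfl⟩ := Finset.mem_image.mp hA'
        exact hx (hA.1 (Finset.mem_insert_self x B))
      rw [Finset.sum_union hdisj]
      have himg : ∑ A ∈ (Q.powersetCard s).image (insert x), ∏ p ∈ A, u p
          = u x * ∑ A ∈ Q.powersetCard s, ∏ p ∈ A, u p := by
        rw [Finset.sum_image, Finset.mul_sum]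
        · apply Finset.sum_congr rfl
          intro A hA
          rw [Finset.mem_powersetCard] at hA
          rw [Finset.prod_insert (fun h => hx (hA.1 h))]
        · intro A hA B hB h
          rw [Finset.mem_coe, Finset.mem_powersetCard] at hA hB
          have hxA : x ∉ A := fun h => hx (hA.1 h)
          have hxB : x ∉ B := fun h => hx (hB.1 h)
          rw [← Finset.erase_insert hxA, ← Finset.erase_insert hxB, h]
      rw [himg, Finset.sum_insert hx]
      have h1 := ih hu' (s+1)
      have h2 := ih hu' s
      have hE0 : (0:ℝ) ≤ ∑ A ∈ Q.powersetCard s, ∏ p ∈ A, u p :=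
        Finset.sum_nonneg fun A hA => Finset.prod_nonneg fun p hp => hu' p
          ((Finset.mem_powersetCard.mp hA).1 hp)
      have hbin := two_term_binomial ha hux s
      have hfac : ((s+1).factorial : ℝ) = ((s+1) : ℝ) * (s.factorial : ℝ) := by
        rw [Nat.factorial_succ]; push_cast; ring
      calc ((s+1).factorial : ℝ) * (∑ A ∈ Q.powersetCard (s+1), ∏ p ∈ A, u p
              + u x * ∑ A ∈ Q.powersetCard s, ∏ p ∈ A, u p)
          = ((s+1).factorial : ℝ) * ∑ A ∈ Q.powersetCard (s+1), ∏ p ∈ A, u p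
            + ((s+1):ℝ) * ((s.factorial : ℝ) * ∑ A ∈ Q.powersetCard s, ∏ p ∈ A, u p) * u x := by
            rw [hfac]; ring
        _ ≤ (∑ p ∈ Q, u p) ^ (s+1) + ((s+1):ℝ) * (∑ p ∈ Q, u p) ^ s * u x := by
            gcongr
        _ ≤ ((∑ p ∈ Q, u p) + u x) ^ (s+1) := hbin
        _ = (u x + ∑ p ∈ Q, u p) ^ (s+1) := by ring
section
variable {w : ℕ → ℝ}

lemma smooth_card_le (hw0 : ∀ n, 0 ≤ w n) (hw1 : w 1 = 1)
    (hwm : ∀ a b : ℕ, Nat.Coprime a b → w (a * b) = w a * w b)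
    (N m : ℕ) (hm : 1 ≤ m) (Q : Finset ℕ) (hQ : ∀ p ∈ Q, p.Prime) (s : ℕ) :
    ∑ c ∈ (Finset.Icc 1 N).filter (fun c => (c.primeFactors ⊆ Q ∧
        ∀ p, c.factorization p = 0 ∨ m ≤ c.factorization p) ∧ c.primeFactors.card = s), w c ≤
      ∑ A ∈ Q.powersetCard s, ∏ p ∈ A, ∑ ℓ ∈ Finset.Icc m N, w (p ^ ℓ) := by
  classical
  set S := (Finset.Icc 1 N).filter (fun c => (c.primeFactors ⊆ Q ∧
        ∀ p, c.factorization p = 0 ∨ m ≤ c.factorization p) ∧ c.primeFactors.card = s) with hS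
  have hmaps : ∀ c ∈ S, c.primeFactors ∈ Q.powersetCard s := by
    intro c hc
    simp only [hS, Finset.mem_filter] at hc
    exact Finset.mem_powersetCard.mpr ⟨hc.2.1.1, hc.2.2⟩
  rw [← Finset.sum_fiberwise_of_maps_to hmaps w]
  apply Finset.sum_le_sum
  intro A hA
  rw [Finset.mem_powersetCard] at hA
  have hAp : ∀ p ∈ A, p.Prime := fun p hp => hQ p (hA.1 hp)
  refine le_trans ?_ (core_fiber hw0 hw1 hwm N m hm A hAp)
  apply Finset.sum_le_sum_of_subset_of_nonneg
  · intro c hc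
    simp only [hS, Finset.mem_filter] at hc ⊢
    exact ⟨hc.1.1, hc.2, hc.1.2.1.2⟩
  · intro c _ _; exact hw0 c

lemma smooth_le (hw0 : ∀ n, 0 ≤ w n) (hw1 : w 1 = 1)
    (hwm : ∀ a b : ℕ, Nat.Coprime a b → w (a * b) = w a * w b)
    (N m : ℕ) (hm : 1 ≤ m) (Q : Finset ℕ) (hQ : ∀ p ∈ Q, p.Prime) :
    ∑ c ∈ (Finset.Icc 1 N).filter (fun c => c.primeFactors ⊆ Q ∧
        ∀ p, c.factorization p = 0 ∨ m ≤ c.factorization p), w c ≤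
      ∏ p ∈ Q, (1 + ∑ ℓ ∈ Finset.Icc m N, w (p ^ ℓ)) := by
  classical
  set S := (Finset.Icc 1 N).filter (fun c => c.primeFactors ⊆ Q ∧
        ∀ p, c.factorization p = 0 ∨ m ≤ c.factorization p) with hS
  have hmaps : ∀ c ∈ S, c.primeFactors ∈ Q.powerset := by
    intro c hc
    simp only [hS, Finset.mem_filter] at hc
    exact Finset.mem_powerset.mpr hc.2.1
  rw [← Finset.sum_fiberwise_of_maps_to hmaps w]
  have hstep : ∀ A ∈ Q.powerset,
      ∑ c ∈ S.filter (fun c => c.primeFactors = A), w c ≤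
        ∏ p ∈ A, ∑ ℓ ∈ Finset.Icc m N, w (p ^ ℓ) := by
    intro A hA
    rw [Finset.mem_powerset] at hA
    have hAp : ∀ p ∈ A, p.Prime := fun p hp => hQ p (hA hp)
    refine le_trans ?_ (core_fiber hw0 hw1 hwm N m hm A hAp)
    apply Finset.sum_le_sum_of_subset_of_nonneg
    · intro c hc
      simp only [hS, Finset.mem_filter] at hc ⊢
      exact ⟨hc.1.1, hc.2, hc.1.2.2⟩
    · intro c _ _; exact hw0 c
  refine le_trans (Finset.sum_le_sum hstep) ?_
  have hcomm : ∏ p ∈ Q, (1 + ∑ ℓ ∈ Finset.Icc m N, w (p ^ ℓ))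
      = ∏ p ∈ Q, ((∑ ℓ ∈ Finset.Icc m N, w (p ^ ℓ)) + 1) := by
    apply Finset.prod_congr rfl; intros; ring
  rw [hcomm, Finset.prod_add]
  apply le_of_eq
  exact Finset.sum_congr rfl fun A _ => by simp

end
section
variable {w : ℕ → ℝ}

/-- The `E`-part of `n`. -/
def aPart (E : Set ℕ) (n : ℕ) : ℕ :=
  ∏ p ∈ n.primeFactors.filter (fun p => p ∈ E), p ^ n.factorization p

def bPart (E : Set ℕ) (n : ℕ) : ℕ :=
  ∏ p ∈ n.primeFactors.filter (fun p => p ∉ E), p ^ n.factorization p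

lemma mem_pf_prime {n q : ℕ} {s : Finset ℕ} (hs : s ⊆ n.primeFactors) (hq : q ∈ s) :
    q.Prime := Nat.prime_of_mem_primeFactors (hs hq)

lemma mem_pf_fact_ne_zero {n q : ℕ} {s : Finset ℕ} (hs : s ⊆ n.primeFactors) (hq : q ∈ s) :
    n.factorization q ≠ 0 := by
  rw [← Finsupp.mem_support_iff, Nat.support_factorization]
  exact hs hq

lemma aPart_ne_zero (E : Set ℕ) (n : ℕ) : aPart E n ≠ 0 := by
  unfold aPart
  exact prod_pow_ne_zero (fun p hp => mem_pf_prime (Finset.filter_subset _ _) hp) _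

lemma bPart_ne_zero (E : Set ℕ) (n : ℕ) : bPart E n ≠ 0 := by
  unfold bPart
  exact prod_pow_ne_zero (fun p hp => mem_pf_prime (Finset.filter_subset _ _) hp) _

lemma aPart_primeFactors (E : Set ℕ) (n : ℕ) :
    (aPart E n).primeFactors = n.primeFactors.filter (fun p => p ∈ E) := by
  unfold aPart
  exact primeFactors_prod_pow (fun p hp => mem_pf_prime (Finset.filter_subset _ _) hp) _
    (fun p hp => mem_pf_fact_ne_zero (Finset.filter_subset _ _) hp)

lemma bPart_primeFactors (E : Set ℕ) (n : ℕ) :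
    (bPart E n).primeFactors = n.primeFactors.filter (fun p => p ∉ E) := by
  unfold bPart
  exact primeFactors_prod_pow (fun p hp => mem_pf_prime (Finset.filter_subset _ _) hp) _
    (fun p hp => mem_pf_fact_ne_zero (Finset.filter_subset _ _) hp)

lemma aPart_factorization (E : Set ℕ) (n : ℕ) (q : ℕ) :
    (aPart E n).factorization q =
      if q ∈ n.primeFactors.filter (fun p => p ∈ E) then n.factorization q else 0 := by
  unfold aPart
  exact fact_prod_pow (fun p hp => mem_pf_prime (Finset.filter_subset _ _) hp) _
    (fun p hp => mem_pf_fact_ne_zero (Finset.filter_subset _ _) hp) q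

lemma aPart_mul_bPart (E : Set ℕ) {n : ℕ} (hn : n ≠ 0) : aPart E n * bPart E n = n := by
  classical
  rw [aPart, bPart, Finset.prod_filter_mul_prod_filter_not]
  exact (recon hn subset_rfl).symm

lemma aPart_coprime_bPart (E : Set ℕ) (n : ℕ) : Nat.Coprime (aPart E n) (bPart E n) := by
  classical
  apply Nat.Coprime.prod_left
  intro p hp
  apply Nat.Coprime.prod_right
  intro q hq
  apply Nat.Coprime.pow
  refine (Nat.coprime_primes (mem_pf_prime (Finset.filter_subset _ _) hp)
    (mem_pf_prime (Finset.filter_subset _ _) hq)).mpr ?_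
  rintro rfl
  exact (Finset.mem_filter.mp hq).2 (Finset.mem_filter.mp hp).2

lemma aPart_le {n : ℕ} (E : Set ℕ) (hn : n ≠ 0) : aPart E n ≤ n := by
  conv_rhs => rw [← aPart_mul_bPart E hn]
  exact Nat.le_mul_of_pos_right _ (Nat.pos_of_ne_zero (bPart_ne_zero E n))

lemma bPart_le {n : ℕ} (E : Set ℕ) (hn : n ≠ 0) : bPart E n ≤ n := by
  conv_rhs => rw [← aPart_mul_bPart E hn]
  exact Nat.le_mul_of_pos_left _ (Nat.pos_of_ne_zero (aPart_ne_zero E n))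

/-- Split the sum according to `n = aPart * bPart`. -/
lemma split_sum (hw0 : ∀ n, 0 ≤ w n)
    (hwm : ∀ a b : ℕ, Nat.Coprime a b → w (a * b) = w a * w b)
    (N : ℕ) (E : Set ℕ) (φ : ℕ → ℕ) (hφ : ∀ n, n ≠ 0 → φ (aPart E n) = φ n) (k : ℕ) :
    ∑ n ∈ (Finset.Icc 1 N).filter (fun n => φ n = k), w n ≤
      (∑ a ∈ (Finset.Icc 1 N).filter
          (fun a => (∀ p ∈ a.primeFactors, p ∈ E) ∧ φ a = k), w a) *
      (∑ b ∈ (Finset.Icc 1 N).filter (fun b => ∀ p ∈ b.primeFactors, p ∉ E), w b) := by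
  classical
  rw [Finset.sum_mul_sum]
  have := sum_le_sum_inj (s := (Finset.Icc 1 N).filter (fun n => φ n = k))
    (t := ((Finset.Icc 1 N).filter (fun a => (∀ p ∈ a.primeFactors, p ∈ E) ∧ φ a = k)) ×ˢ
      ((Finset.Icc 1 N).filter (fun b => ∀ p ∈ b.primeFactors, p ∉ E)))
    (fun n => (aPart E n, bPart E n)) ?_ ?_ w (fun q => w q.1 * w q.2) ?_ ?_
  · exact le_trans this (le_of_eq (by rw [Finset.sum_product]))
  · intro n hn
    simp only [Finset.mem_filter, Finset.mem_Icc] at hn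
    have hn0 : n ≠ 0 := by omega
    rw [Finset.mem_product]
    constructor
    · simp only [Finset.mem_filter, Finset.mem_Icc]
      refine ⟨⟨Nat.pos_of_ne_zero (aPart_ne_zero E n), le_trans (aPart_le E hn0) hn.1.2⟩, ?_, ?_⟩
      · intro p hp
        rw [aPart_primeFactors] at hp
        exact (Finset.mem_filter.mp hp).2
      · rw [hφ n hn0]; exact hn.2
    · simp only [Finset.mem_filter, Finset.mem_Icc]
      refine ⟨⟨Nat.pos_of_ne_zero (bPart_ne_zero E n), le_trans (bPart_le E hn0) hn.1.2⟩, ?_⟩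
      intro p hp
      rw [bPart_primeFactors] at hp
      exact (Finset.mem_filter.mp hp).2
  · intro n hn n' hn' h
    simp only [Finset.mem_filter, Finset.mem_Icc] at hn hn'
    have h1 : aPart E n = aPart E n' := congrArg Prod.fst h
    have h2 : bPart E n = bPart E n' := congrArg Prod.snd h
    rw [← aPart_mul_bPart E (show n ≠ 0 by omega), ← aPart_mul_bPart E (show n' ≠ 0 by omega),
      h1, h2]
  · intro n hn
    simp only [Finset.mem_filter, Finset.mem_Icc] at hn
    have hn0 : n ≠ 0 := by omega
    conv_lhs => rw [← aPart_mul_bPart E hn0]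
    exact hwm _ _ (aPart_coprime_bPart E n)
  · intro q _
    exact mul_nonneg (hw0 _) (hw0 _)

end
section
variable {w : ℕ → ℝ}

/-- set of primes dividing `a` exactly once -/
def onceSet (a : ℕ) : Finset ℕ := a.primeFactors.filter (fun p => a.factorization p = 1)

/-- squarefull part of `a` -/
def sqPart (a : ℕ) : ℕ :=
  ∏ p ∈ a.primeFactors.filter (fun p => a.factorization p ≠ 1), p ^ a.factorization p

lemma sqPart_ne_zero (a : ℕ) : sqPart a ≠ 0 := by
  unfold sqPart
  exact prod_pow_ne_zero (fun p hp => mem_pf_prime (Finset.filter_subset _ _) hp) _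

lemma sqPart_primeFactors (a : ℕ) :
    (sqPart a).primeFactors = a.primeFactors.filter (fun p => a.factorization p ≠ 1) := by
  unfold sqPart
  exact primeFactors_prod_pow (fun p hp => mem_pf_prime (Finset.filter_subset _ _) hp) _
    (fun p hp => mem_pf_fact_ne_zero (Finset.filter_subset _ _) hp)

lemma sqPart_factorization (a : ℕ) (q : ℕ) :
    (sqPart a).factorization q =
      if q ∈ a.primeFactors.filter (fun p => a.factorization p ≠ 1)
        then a.factorization q else 0 := by
  unfold sqPart
  exact fact_prod_pow (fun p hp => mem_pf_prime (Finset.filter_subset _ _) hp) _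
    (fun p hp => mem_pf_fact_ne_zero (Finset.filter_subset _ _) hp) q

lemma once_mul_sqPart {a : ℕ} (ha : a ≠ 0) : (∏ p ∈ onceSet a, p) * sqPart a = a := by
  classical
  have h1 : ∏ p ∈ onceSet a, p = ∏ p ∈ a.primeFactors.filter (fun p => a.factorization p = 1),
      p ^ a.factorization p := by
    apply Finset.prod_congr rfl
    intro p hp
    rw [(Finset.mem_filter.mp hp).2, pow_one]
  rw [h1, sqPart, Finset.prod_filter_mul_prod_filter_not]
  exact (recon ha subset_rfl).symm

lemma once_coprime_sqPart (a : ℕ) : Nat.Coprime (∏ p ∈ onceSet a, p) (sqPart a) := by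
  classical
  apply Nat.Coprime.prod_left
  intro p hp
  apply Nat.Coprime.prod_right
  intro q hq
  apply Nat.Coprime.pow_right
  refine (Nat.coprime_primes (mem_pf_prime (Finset.filter_subset _ _) hp)
    (mem_pf_prime (Finset.filter_subset _ _) hq)).mpr ?_
  rintro rfl
  exact (Finset.mem_filter.mp hq).2 (Finset.mem_filter.mp hp).2

lemma sqPart_le {a : ℕ} (ha : a ≠ 0) : sqPart a ≤ a := by
  conv_rhs => rw [← once_mul_sqPart ha]
  exact Nat.le_mul_of_pos_left _ (Nat.pos_of_ne_zero (Finset.prod_ne_zero_iff.mpr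
    (fun p hp => (mem_pf_prime (Finset.filter_subset _ _) hp).pos.ne')))

/-- Second splitting: `a = (∏ p ∈ A₁) * c` with `c` squarefull. -/
lemma split_sq (hw0 : ∀ n, 0 ≤ w n) (hw1 : w 1 = 1)
    (hwm : ∀ a b : ℕ, Nat.Coprime a b → w (a * b) = w a * w b)
    (N k : ℕ) (Q : Finset ℕ) (φ : ℕ → ℕ) (ψ : Finset ℕ → ℕ → ℕ)
    (hφψ : ∀ a, a ≠ 0 → φ a = ψ (onceSet a) (sqPart a)) :
    ∑ a ∈ (Finset.Icc 1 N).filter (fun a => a.primeFactors ⊆ Q ∧ φ a = k), w a ≤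
      ∑ q ∈ ((Q.powerset ×ˢ ((Finset.Icc 1 N).filter (fun c => c.primeFactors ⊆ Q ∧
          ∀ p, c.factorization p = 0 ∨ 2 ≤ c.factorization p))).filter
          (fun q => ψ q.1 q.2 = k)),
        (∏ p ∈ q.1, w p) * w q.2 := by
  classical
  apply sum_le_sum_inj (fun a => (onceSet a, sqPart a))
  · intro a ha
    simp only [Finset.mem_filter, Finset.mem_Icc] at ha
    obtain ⟨⟨ha1, haN⟩, hsub, hφa⟩ := ha
    have ha0 : a ≠ 0 := by omega
    simp only [Finset.mem_filter, Finset.mem_product, Finset.mem_powerset, Finset.mem_Icc]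
    refine ⟨⟨?_, ⟨?_, ?_, ?_⟩⟩, ?_⟩
    · exact le_trans (Finset.filter_subset _ _) hsub
    · exact ⟨Nat.pos_of_ne_zero (sqPart_ne_zero a), le_trans (sqPart_le ha0) haN⟩
    · rw [sqPart_primeFactors]
      exact le_trans (Finset.filter_subset _ _) hsub
    · intro p
      rw [sqPart_factorization]
      by_cases hp : p ∈ a.primeFactors.filter (fun p => a.factorization p ≠ 1)
      · right
        rw [if_pos hp]
        have h1 := (Finset.mem_filter.mp hp).2
        have h2 := mem_pf_fact_ne_zero (le_refl a.primeFactors) (Finset.mem_filter.mp hp).1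
        omega
      · left; rw [if_neg hp]
    · rw [← hφψ a ha0]; exact hφa
  · intro a ha a' ha' h
    simp only [Finset.mem_filter, Finset.mem_Icc] at ha ha'
    have h1 : onceSet a = onceSet a' := congrArg Prod.fst h
    have h2 : sqPart a = sqPart a' := congrArg Prod.snd h
    rw [← once_mul_sqPart (show a ≠ 0 by omega), ← once_mul_sqPart (show a' ≠ 0 by omega),
      h1, h2]
  · intro a ha
    simp only [Finset.mem_filter, Finset.mem_Icc] at ha
    have ha0 : a ≠ 0 := by omega
    have honce : ∀ p ∈ onceSet a, p.Prime :=
      fun p hp => mem_pf_prime (Finset.filter_subset _ _) hp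
    calc w a = w ((∏ p ∈ onceSet a, p) * sqPart a) := by rw [once_mul_sqPart ha0]
      _ = w (∏ p ∈ onceSet a, p) * w (sqPart a) := hwm _ _ (once_coprime_sqPart a)
      _ = (∏ p ∈ onceSet a, w p) * w (sqPart a) := by
          congr 1
          have : ∏ p ∈ onceSet a, p = ∏ p ∈ onceSet a, p ^ (fun _ => 1) p := by simp
          rw [this, mult_prod_pow hw1 hwm honce]
          simp
  · intro q _
    exact mul_nonneg (Finset.prod_nonneg fun p _ => hw0 p) (hw0 _)

end
section

lemma omega_once_sq (a : ℕ) :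
    a.primeFactors.card = (onceSet a).card + (sqPart a).primeFactors.card := by
  classical
  rw [sqPart_primeFactors, onceSet]
  exact (Finset.card_filter_add_card_filter_not (fun p => a.factorization p = 1)).symm

lemma bigOmega_once_sq {a : ℕ} (ha : a ≠ 0) :
    bigOmega a = (onceSet a).card + bigOmega (sqPart a) := by
  classical
  rw [bigOmega_eq_sum ha, bigOmega_eq_sum (sqPart_ne_zero a)]
  rw [← Finset.sum_filter_add_sum_filter_not a.primeFactors (fun p => a.factorization p = 1)]
  congr 1
  · rw [Finset.card_eq_sum_ones]
    apply Finset.sum_congr rfl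
    intro p hp
    exact (Finset.mem_filter.mp hp).2
  · rw [sqPart_primeFactors]
    apply Finset.sum_congr rfl
    intro p hp
    rw [sqPart_factorization, if_pos hp]

lemma key_ratio {T α : ℝ} {k e : ℕ} (he : e ≤ k) (hT : 0 ≤ T) (hα : 0 < α)
    (hkT : (k : ℝ) ≤ α * T) :
    T ^ (k - e) / ((k - e).factorial : ℝ) ≤ α ^ e * (T ^ k / (k.factorial : ℝ)) := by
  have hfp : (0:ℝ) < (k.factorial : ℝ) := by exact_mod_cast Nat.factorial_pos k
  have hfp' : (0:ℝ) < ((k - e).factorial : ℝ) := by exact_mod_cast Nat.factorial_pos (k - e)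
  have h1 : (k.factorial : ℝ) ≤ ((k - e).factorial : ℝ) * (α * T) ^ e := by
    calc (k.factorial : ℝ) ≤ ((k - e).factorial : ℝ) * (k : ℝ) ^ e := by
          exact_mod_cast factorial_le_sub_mul_pow he
      _ ≤ ((k - e).factorial : ℝ) * (α * T) ^ e := by
          gcongr
  have hsplit : T ^ k = T ^ (k - e) * T ^ e := by
    rw [← pow_add]
    congr 1
    omega
  rw [div_le_iff₀ hfp']
  have hrhs : α ^ e * (T ^ k / (k.factorial : ℝ)) * ((k - e).factorial : ℝ)
      = T ^ (k - e) * (((k - e).factorial : ℝ) * (α * T) ^ e) / (k.factorial : ℝ) := by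
    rw [hsplit, mul_pow]
    ring
  rw [hrhs, le_div_iff₀ hfp]
  have hTnn : (0:ℝ) ≤ T ^ (k - e) := pow_nonneg hT _
  exact mul_le_mul_of_nonneg_left h1 hTnn

end
section
variable {w : ℕ → ℝ}

lemma sum_range_binom (T C : ℝ) (hT : 0 ≤ T) (hC : 0 ≤ C) (k : ℕ) :
    ∑ j ∈ Finset.range (k+1), T ^ j / (j.factorial : ℝ) * (C ^ (k-j) / ((k-j).factorial : ℝ))
      = (T + C) ^ k / (k.factorial : ℝ) := by
  rw [add_pow, Finset.sum_div]
  apply Finset.sum_congr rfl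
  intro j hj
  have hjk : j ≤ k := by
    rw [Finset.mem_range] at hj; omega
  have hcf : ((k.choose j) * j.factorial * (k-j).factorial : ℕ) = k.factorial :=
    Nat.choose_mul_factorial_mul_factorial hjk
  have hcfR : (k.factorial : ℝ) = (k.choose j : ℝ) * (j.factorial : ℝ) * ((k-j).factorial : ℝ) := by
    exact_mod_cast hcf.symm
  have h1 : (j.factorial : ℝ) ≠ 0 := by positivity
  have h2 : ((k-j).factorial : ℝ) ≠ 0 := by positivity
  have h3 : (k.factorial : ℝ) ≠ 0 := by positivity
  have h0 : (k.choose j : ℝ) ≠ 0 := by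
    have := Nat.choose_pos hjk
    positivity
  rw [hcfR]
  field_simp

lemma asum_omega_le (hw0 : ∀ n, 0 ≤ w n) (hw1 : w 1 = 1)
    (hwm : ∀ a b : ℕ, Nat.Coprime a b → w (a * b) = w a * w b)
    (N : ℕ) (Q : Finset ℕ) (hQ : ∀ p ∈ Q, p.Prime) (k : ℕ) (C₁ : ℝ)
    (hC : ∑ p ∈ Q, ∑ ℓ ∈ Finset.Icc 2 N, w (p ^ ℓ) ≤ C₁) :
    ∑ a ∈ (Finset.Icc 1 N).filter (fun a => a.primeFactors ⊆ Q ∧ a.primeFactors.card = k), w a ≤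
      (∑ p ∈ Q, w p + C₁) ^ k / (k.factorial : ℝ) := by
  classical
  set T := ∑ p ∈ Q, w p with hTdef
  have hT0 : 0 ≤ T := Finset.sum_nonneg fun p _ => hw0 p
  have hR0 : ∀ p, 0 ≤ ∑ ℓ ∈ Finset.Icc 2 N, w (p ^ ℓ) :=
    fun p => Finset.sum_nonneg fun ℓ _ => hw0 _
  have hC0 : 0 ≤ C₁ := le_trans (Finset.sum_nonneg fun p _ => hR0 p) hC
  refine le_trans (split_sq hw0 hw1 hwm N k Q (fun a => a.primeFactors.card)
    (fun A c => A.card + c.primeFactors.card) (fun a _ => omega_once_sq a)) ?_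
  set Sq := (Finset.Icc 1 N).filter (fun c => c.primeFactors ⊆ Q ∧
      ∀ p, c.factorization p = 0 ∨ 2 ≤ c.factorization p) with hSqdef
  set Pairs := (Q.powerset ×ˢ Sq).filter
      (fun q => q.1.card + q.2.primeFactors.card = k) with hPairsdef
  have hmaps : ∀ q ∈ Pairs, q.1.card ∈ Finset.range (k+1) := by
    intro q hq
    simp only [hPairsdef, Finset.mem_filter] at hq
    rw [Finset.mem_range]
    omega
  rw [← Finset.sum_fiberwise_of_maps_to hmaps (fun q => (∏ p ∈ q.1, w p) * w q.2)]
  have hinner : ∀ j ∈ Finset.range (k+1),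
      ∑ q ∈ Pairs.filter (fun q => q.1.card = j), (∏ p ∈ q.1, w p) * w q.2 ≤
        T ^ j / (j.factorial : ℝ) * (C₁ ^ (k-j) / ((k-j).factorial : ℝ)) := by
    intro j hj
    rw [Finset.mem_range] at hj
    have hsub : Pairs.filter (fun q => q.1.card = j) ⊆
        (Q.powersetCard j) ×ˢ ((Finset.Icc 1 N).filter (fun c => (c.primeFactors ⊆ Q ∧
          ∀ p, c.factorization p = 0 ∨ 2 ≤ c.factorization p) ∧ c.primeFactors.card = k - j)) := by
      intro q hq
      simp only [hPairsdef, hSqdef, Finset.mem_filter, Finset.mem_product,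
        Finset.mem_powerset, Finset.mem_powersetCard] at hq ⊢
      obtain ⟨⟨⟨h1, h2, h3, h4⟩, h5⟩, h6⟩ := hq
      exact ⟨⟨h1, h6⟩, h2, ⟨h3, h4⟩, by omega⟩
    refine le_trans (Finset.sum_le_sum_of_subset_of_nonneg hsub
      (fun q _ _ => mul_nonneg (Finset.prod_nonneg fun p _ => hw0 p) (hw0 _))) ?_
    rw [Finset.sum_product]
    simp only [← Finset.sum_mul, ← Finset.mul_sum]
    have hF1 : ∑ A ∈ Q.powersetCard j, ∏ p ∈ A, w p ≤ T ^ j / (j.factorial : ℝ) := by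
      rw [le_div_iff₀ (by positivity : (0:ℝ) < (j.factorial : ℝ))]
      rw [mul_comm]
      exact esymm_le (fun p _ => hw0 p) j
    have hF2 : ∑ c ∈ (Finset.Icc 1 N).filter (fun c => (c.primeFactors ⊆ Q ∧
          ∀ p, c.factorization p = 0 ∨ 2 ≤ c.factorization p) ∧ c.primeFactors.card = k - j), w c
        ≤ C₁ ^ (k-j) / (((k-j)).factorial : ℝ) := by
      refine le_trans (smooth_card_le hw0 hw1 hwm N 2 (by norm_num) Q hQ (k-j)) ?_
      have := esymm_le (u := fun p => ∑ ℓ ∈ Finset.Icc 2 N, w (p ^ ℓ)) (Q := Q)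
        (fun p _ => hR0 p) (k-j)
      rw [le_div_iff₀ (by positivity : (0:ℝ) < ((k-j).factorial : ℝ)), mul_comm]
      refine le_trans this ?_
      exact pow_le_pow_left₀ (Finset.sum_nonneg fun p _ => hR0 p) hC _
    have hs1 : 0 ≤ ∑ A ∈ Q.powersetCard j, ∏ p ∈ A, w p :=
      Finset.sum_nonneg fun A _ => Finset.prod_nonneg fun p _ => hw0 p
    exact mul_le_mul hF1 hF2 (Finset.sum_nonneg fun c _ => hw0 c) (by positivity)
  refine le_trans (Finset.sum_le_sum hinner) ?_
  rw [sum_range_binom T C₁ hT0 hC0 k]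

lemma asum_bigomega_le (hw0 : ∀ n, 0 ≤ w n) (hw1 : w 1 = 1)
    (hwm : ∀ a b : ℕ, Nat.Coprime a b → w (a * b) = w a * w b)
    (N : ℕ) (Q : Finset ℕ) (hQ : ∀ p ∈ Q, p.Prime) (k : ℕ) (α C₂ : ℝ) (hα : 0 < α)
    (hkT : (k : ℝ) ≤ α * ∑ p ∈ Q, w p)
    (hC : ∑ p ∈ Q, ∑ ℓ ∈ Finset.Icc 2 N, w (p ^ ℓ) * α ^ ℓ ≤ C₂) :
    ∑ a ∈ (Finset.Icc 1 N).filter (fun a => a.primeFactors ⊆ Q ∧ bigOmega a = k), w a ≤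
      Real.exp C₂ * ((∑ p ∈ Q, w p) ^ k / (k.factorial : ℝ)) := by
  classical
  set T := ∑ p ∈ Q, w p with hTdef
  have hT0 : 0 ≤ T := Finset.sum_nonneg fun p _ => hw0 p
  -- the weighted multiplicative function
  set w' : ℕ → ℝ := fun n => w n * α ^ (bigOmega n) with hw'def
  have hw'0 : ∀ n, 0 ≤ w' n := fun n => mul_nonneg (hw0 n) (pow_nonneg hα.le _)
  have hbig1 : bigOmega 1 = 0 := by simp [bigOmega]
  have hw'1 : w' 1 = 1 := by simp [hw'def, hbig1, hw1]
  have hw'm : ∀ a b : ℕ, Nat.Coprime a b → w' (a * b) = w' a * w' b := by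
    intro a b hab
    rcases eq_or_ne a 0 with rfl | ha
    · have hb : b = 1 := Nat.coprime_zero_left b |>.mp hab
      subst hb; simp [hw'1]
    rcases eq_or_ne b 0 with rfl | hb
    · have ha' : a = 1 := Nat.coprime_zero_right a |>.mp hab
      subst ha'; simp [hw'1]
    simp only [hw'def]
    rw [hwm a b hab, bigOmega_mul ha hb, pow_add]
    ring
  refine le_trans (split_sq hw0 hw1 hwm N k Q bigOmega
    (fun A c => A.card + bigOmega c) (fun a ha => bigOmega_once_sq ha)) ?_
  set Sq := (Finset.Icc 1 N).filter (fun c => c.primeFactors ⊆ Q ∧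
      ∀ p, c.factorization p = 0 ∨ 2 ≤ c.factorization p) with hSqdef
  -- reorganize the pair sum over c
  have hre : ∑ q ∈ ((Q.powerset ×ˢ Sq).filter (fun q => q.1.card + bigOmega q.2 = k)),
        (∏ p ∈ q.1, w p) * w q.2
      = ∑ c ∈ Sq, (∑ A ∈ Q.powerset.filter (fun A => A.card + bigOmega c = k),
          ∏ p ∈ A, w p) * w c := by
    rw [Finset.sum_filter, Finset.sum_product_right]
    apply Finset.sum_congr rfl
    intro c _
    rw [Finset.sum_filter, Finset.sum_mul]
    apply Finset.sum_congr rfl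
    intro A _
    split_ifs <;> simp
  rw [hre]
  have hinner : ∀ c ∈ Sq,
      (∑ A ∈ Q.powerset.filter (fun A => A.card + bigOmega c = k), ∏ p ∈ A, w p) * w c ≤
        (T ^ k / (k.factorial : ℝ)) * w' c := by
    intro c _
    have hwc : 0 ≤ w c := hw0 c
    have hstep : ∑ A ∈ Q.powerset.filter (fun A => A.card + bigOmega c = k), ∏ p ∈ A, w p ≤
        α ^ (bigOmega c) * (T ^ k / (k.factorial : ℝ)) := by
      by_cases he : bigOmega c ≤ k
      · have hsub : Q.powerset.filter (fun A => A.card + bigOmega c = k) ⊆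
            Q.powersetCard (k - bigOmega c) := by
          intro A hA
          simp only [Finset.mem_filter, Finset.mem_powerset, Finset.mem_powersetCard] at hA ⊢
          exact ⟨hA.1, by omega⟩
        refine le_trans (Finset.sum_le_sum_of_subset_of_nonneg hsub
          (fun A _ _ => Finset.prod_nonneg fun p _ => hw0 p)) ?_
        have h1 : ∑ A ∈ Q.powersetCard (k - bigOmega c), ∏ p ∈ A, w p ≤
            T ^ (k - bigOmega c) / ((k - bigOmega c).factorial : ℝ) := by
          rw [le_div_iff₀ (by positivity : (0:ℝ) < ((k - bigOmega c).factorial : ℝ)), mul_comm]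
          exact esymm_le (fun p _ => hw0 p) _
        exact le_trans h1 (key_ratio he hT0 hα hkT)
      · have hempty : Q.powerset.filter (fun A => A.card + bigOmega c = k) = ∅ := by
          apply Finset.filter_false_of_mem
          intro A _
          omega
        rw [hempty, Finset.sum_empty]
        positivity
    calc (∑ A ∈ Q.powerset.filter (fun A => A.card + bigOmega c = k), ∏ p ∈ A, w p) * w c
        ≤ (α ^ (bigOmega c) * (T ^ k / (k.factorial : ℝ))) * w c :=
          mul_le_mul_of_nonneg_right hstep hwc
      _ = (T ^ k / (k.factorial : ℝ)) * w' c := by rw [hw'def]; ring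
  refine le_trans (Finset.sum_le_sum hinner) ?_
  rw [← Finset.mul_sum, mul_comm (Real.exp C₂)]
  apply mul_le_mul_of_nonneg_left ?_ (by positivity)
  -- now bound ∑ c ∈ Sq, w' c
  refine le_trans (smooth_le hw'0 hw'1 hw'm N 2 (by norm_num) Q hQ) ?_
  have hS'eq : ∀ p ∈ Q, ∑ ℓ ∈ Finset.Icc 2 N, w' (p ^ ℓ)
      = ∑ ℓ ∈ Finset.Icc 2 N, w (p ^ ℓ) * α ^ ℓ := by
    intro p hp
    apply Finset.sum_congr rfl
    intro ℓ _
    rw [hw'def]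
    simp only
    rw [bigOmega_pow (hQ p hp)]
  calc ∏ p ∈ Q, (1 + ∑ ℓ ∈ Finset.Icc 2 N, w' (p ^ ℓ))
      = ∏ p ∈ Q, (1 + ∑ ℓ ∈ Finset.Icc 2 N, w (p ^ ℓ) * α ^ ℓ) := by
        apply Finset.prod_congr rfl
        intro p hp
        rw [hS'eq p hp]
    _ ≤ ∏ p ∈ Q, Real.exp (∑ ℓ ∈ Finset.Icc 2 N, w (p ^ ℓ) * α ^ ℓ) := by
        apply Finset.prod_le_prod
        · intro p _
          have : 0 ≤ ∑ ℓ ∈ Finset.Icc 2 N, w (p ^ ℓ) * α ^ ℓ :=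
            Finset.sum_nonneg fun ℓ _ => mul_nonneg (hw0 _) (pow_nonneg hα.le _)
          linarith
        · intro p _
          linarith [Real.add_one_le_exp (∑ ℓ ∈ Finset.Icc 2 N, w (p ^ ℓ) * α ^ ℓ)]
    _ = Real.exp (∑ p ∈ Q, ∑ ℓ ∈ Finset.Icc 2 N, w (p ^ ℓ) * α ^ ℓ) :=
        (Real.exp_sum _ _).symm
    _ ≤ Real.exp C₂ := Real.exp_le_exp.mpr hC

end
section
variable {w : ℕ → ℝ}

lemma bsum_le (hw0 : ∀ n, 0 ≤ w n) (hw1 : w 1 = 1)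
    (hwm : ∀ a b : ℕ, Nat.Coprime a b → w (a * b) = w a * w b)
    (N : ℕ) (hN : 1 ≤ N) (E : Set ℕ) (Q : Finset ℕ) (hQ : ∀ p ∈ Q, p.Prime)
    (hQ2 : ∀ p : ℕ, p.Prime → p ≤ N → p ∉ E → p ∈ Q) (C : ℝ)
    (hC : ∑ p ∈ Q, ∑ ℓ ∈ Finset.Icc 2 N, w (p ^ ℓ) ≤ C) :
    ∑ b ∈ (Finset.Icc 1 N).filter (fun b => ∀ p ∈ b.primeFactors, p ∉ E), w b ≤
      Real.exp ((∑ p ∈ Q, w p) + C) := by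
  classical
  have hsub : (Finset.Icc 1 N).filter (fun b => ∀ p ∈ b.primeFactors, p ∉ E) ⊆
      (Finset.Icc 1 N).filter (fun c => c.primeFactors ⊆ Q ∧
        ∀ p, c.factorization p = 0 ∨ 1 ≤ c.factorization p) := by
    intro b hb
    simp only [Finset.mem_filter, Finset.mem_Icc] at hb ⊢
    refine ⟨hb.1, ?_, fun p => by omega⟩
    intro p hp
    have hp' : p.Prime := Nat.prime_of_mem_primeFactors hp
    have hdvd : p ∣ b := Nat.dvd_of_mem_primeFactors hp
    have hpN : p ≤ N := le_trans (Nat.le_of_dvd (by omega) hdvd) hb.1.2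
    exact hQ2 p hp' hpN (hb.2 p hp)
  refine le_trans (Finset.sum_le_sum_of_subset_of_nonneg hsub (fun b _ _ => hw0 b)) ?_
  refine le_trans (smooth_le hw0 hw1 hwm N 1 le_rfl Q hQ) ?_
  have hIcc : Finset.Icc 1 N = insert 1 (Finset.Icc 2 N) := by
    ext m
    simp only [Finset.mem_Icc, Finset.mem_insert]
    omega
  have h1n : (1:ℕ) ∉ Finset.Icc 2 N := by simp
  calc ∏ p ∈ Q, (1 + ∑ ℓ ∈ Finset.Icc 1 N, w (p ^ ℓ))
      = ∏ p ∈ Q, (1 + (w p + ∑ ℓ ∈ Finset.Icc 2 N, w (p ^ ℓ))) := by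
        apply Finset.prod_congr rfl
        intro p _
        rw [hIcc, Finset.sum_insert h1n, pow_one]
    _ ≤ ∏ p ∈ Q, Real.exp (w p + ∑ ℓ ∈ Finset.Icc 2 N, w (p ^ ℓ)) := by
        apply Finset.prod_le_prod
        · intro p _
          have h2 : 0 ≤ ∑ ℓ ∈ Finset.Icc 2 N, w (p ^ ℓ) :=
            Finset.sum_nonneg fun ℓ _ => hw0 _
          have := hw0 p
          linarith
        · intro p _
          linarith [Real.add_one_le_exp (w p + ∑ ℓ ∈ Finset.Icc 2 N, w (p ^ ℓ))]
    _ = Real.exp (∑ p ∈ Q, (w p + ∑ ℓ ∈ Finset.Icc 2 N, w (p ^ ℓ))) := (Real.exp_sum _ _).symm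
    _ ≤ Real.exp ((∑ p ∈ Q, w p) + C) := by
        rw [Real.exp_le_exp, Finset.sum_add_distrib]
        have : 0 ≤ ∑ p ∈ Q, w p := Finset.sum_nonneg fun p _ => hw0 p
        linarith

end

end Helpers

/-- **Lemma 2.2 (Hardy–Ramanujan inequality with harmonic weights).**
Under the stated hypotheses on the prime power values of `f`,
`∑_{n ≤ x, g(n,E) = k} f(n)/n ≪_{C₂} (M_f(x,E) + C₁)^k / k! · e^{M_f(x,Eᶜ)}`
for all `k ≥ 0` when `g = ω`, and for `0 ≤ k ≤ α M_f(x,E)` when `g = Ω`. -/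
theorem hardy_ramanujan_harmonic (α C₁ C₂ : ℝ) (hα : 0 < α) (hC₁ : 0 < C₁)
    (hC₂ : 0 < C₂) :
    ∃ K > 0,
      ∀ (x : ℝ) (E : Set ℕ) (f : ℕ → ℝ),
        2 ≤ x → (∀ n, 0 ≤ f n) → f 1 = 1 →
        (∀ m n : ℕ, Nat.Coprime m n → f (m * n) = f m * f n) →
        (∀ P L : ℕ, ∑ p ∈ (Finset.range P).filter (fun p => p.Prime ∧ p ∈ E),
            ∑ ℓ ∈ Finset.Icc 2 L, f (p ^ ℓ) / (p : ℝ) ^ ℓ ≤ C₁) →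
        ((∀ P L : ℕ, ∑ p ∈ (Finset.range P).filter (fun p => p.Prime ∧ p ∉ E),
              ∑ ℓ ∈ Finset.Icc 2 L, f (p ^ ℓ) / (p : ℝ) ^ ℓ ≤ C₂) →
          ∀ k : ℕ,
            ∑ n ∈ (Finset.Icc 1 ⌊x⌋₊).filter (fun n => omegaE E n = k), f n / n ≤
              K * (MfE f x E + C₁) ^ k / (k.factorial : ℝ) * Real.exp (MfE f x Eᶜ)) ∧
        ((∀ P L : ℕ,
            (∑ p ∈ (Finset.range P).filter (fun p => p.Prime ∧ p ∉ E),
                ∑ ℓ ∈ Finset.Icc 2 L, f (p ^ ℓ) / (p : ℝ) ^ ℓ) +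
              (∑ p ∈ (Finset.range P).filter (fun p => p.Prime ∧ p ∈ E),
                ∑ ℓ ∈ Finset.Icc 2 L, f (p ^ ℓ) * α ^ ℓ / (p : ℝ) ^ ℓ) ≤ C₂) →
          ∀ k : ℕ, (k : ℝ) ≤ α * MfE f x E →
            ∑ n ∈ (Finset.Icc 1 ⌊x⌋₊).filter (fun n => bigOmegaE E n = k), f n / n ≤
              K * (MfE f x E + C₁) ^ k / (k.factorial : ℝ) * Real.exp (MfE f x Eᶜ)) := by
  classical
  refine ⟨Real.exp (2 * C₂), Real.exp_pos _, ?_⟩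
  intro x E f hx hf0 hf1 hfm hhyp1
  set N := ⌊x⌋₊ with hNdef
  have hN1 : 1 ≤ N := by
    rw [hNdef]
    exact Nat.le_floor (by exact_mod_cast le_trans (by norm_num) hx)
  set w : ℕ → ℝ := fun n => f n / (n : ℝ) with hwdef
  have hw0 : ∀ n, 0 ≤ w n := fun n => div_nonneg (hf0 n) (Nat.cast_nonneg n)
  have hw1 : w 1 = 1 := by simp [hwdef, hf1]
  have hwm : ∀ a b : ℕ, Nat.Coprime a b → w (a * b) = w a * w b := by
    intro a b hab
    simp only [hwdef]
    rw [hfm a b hab, Nat.cast_mul, div_mul_div_comm]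
  set Q := (primesUpTo x).filter (fun p => p ∈ E) with hQdef
  set Qc := (primesUpTo x).filter (fun p => p ∉ E) with hQcdef
  have hQp : ∀ p ∈ Q, p.Prime := by
    intro p hp
    rw [hQdef, primesUpTo] at hp
    simp only [Finset.mem_filter, Finset.mem_range] at hp
    exact hp.1.2
  have hQcp : ∀ p ∈ Qc, p.Prime := by
    intro p hp
    rw [hQcdef, primesUpTo] at hp
    simp only [Finset.mem_filter, Finset.mem_range] at hp
    exact hp.1.2
  have hQeq : (Finset.range (N + 1)).filter (fun p => p.Prime ∧ p ∈ E) = Q := by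
    rw [hQdef, primesUpTo, Finset.filter_filter, hNdef]
  have hQceq : (Finset.range (N + 1)).filter (fun p => p.Prime ∧ p ∉ E) = Qc := by
    rw [hQcdef, primesUpTo, Finset.filter_filter, hNdef]
  have hT : MfE f x E = ∑ p ∈ Q, w p := by
    rw [MfE, hQdef]
  have hMEc : MfE f x Eᶜ = ∑ p ∈ Qc, w p := by
    rw [MfE, hQcdef]
    apply Finset.sum_congr ?_ (fun _ _ => rfl)
    ext p
    simp only [Finset.mem_filter, Set.mem_compl_iff]
  have hT0 : 0 ≤ ∑ p ∈ Q, w p := Finset.sum_nonneg fun p _ => hw0 p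
  have hcast : ∀ p ℓ : ℕ, w (p ^ ℓ) = f (p ^ ℓ) / (p : ℝ) ^ ℓ := by
    intro p ℓ
    simp only [hwdef]
    rw [Nat.cast_pow]
  have hC1sum : ∑ p ∈ Q, ∑ ℓ ∈ Finset.Icc 2 N, w (p ^ ℓ) ≤ C₁ := by
    have h := hhyp1 (N + 1) N
    rw [hQeq] at h
    refine le_trans (le_of_eq ?_) h
    exact Finset.sum_congr rfl fun p _ => Finset.sum_congr rfl fun ℓ _ => hcast p ℓ
  -- the prime-membership helper
  have hmemQ : ∀ p : ℕ, p.Prime → p ≤ N → p ∈ E → p ∈ Q := by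
    intro p hp hpN hpE
    rw [hQdef, primesUpTo]
    simp only [Finset.mem_filter, Finset.mem_range, ← hNdef]
    exact ⟨⟨by omega, hp⟩, hpE⟩
  have hmemQc : ∀ p : ℕ, p.Prime → p ≤ N → p ∉ E → p ∈ Qc := by
    intro p hp hpN hpE
    rw [hQcdef, primesUpTo]
    simp only [Finset.mem_filter, Finset.mem_range, ← hNdef]
    exact ⟨⟨by omega, hp⟩, hpE⟩
  constructor
  · -- ω case
    intro hhyp2 k
    have hC2sum : ∑ p ∈ Qc, ∑ ℓ ∈ Finset.Icc 2 N, w (p ^ ℓ) ≤ C₂ := by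
      have h := hhyp2 (N + 1) N
      rw [hQceq] at h
      refine le_trans (le_of_eq ?_) h
      exact Finset.sum_congr rfl fun p _ => Finset.sum_congr rfl fun ℓ _ => hcast p ℓ
    have hφ : ∀ n : ℕ, n ≠ 0 → omegaE E (aPart E n) = omegaE E n := by
      intro n hn
      rw [omegaE, omegaE, aPart_primeFactors, Finset.filter_filter]
      congr 1
      exact Finset.filter_congr fun p _ => by simp
    have hsplit := split_sum hw0 hwm N E (omegaE E) hφ k
    have hAsub : (Finset.Icc 1 N).filter
        (fun a => (∀ p ∈ a.primeFactors, p ∈ E) ∧ omegaE E a = k) ⊆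
        (Finset.Icc 1 N).filter (fun a => a.primeFactors ⊆ Q ∧ a.primeFactors.card = k) := by
      intro a ha
      simp only [Finset.mem_filter, Finset.mem_Icc] at ha ⊢
      obtain ⟨⟨ha1, haN⟩, hE, hcard⟩ := ha
      have hsubQ : a.primeFactors ⊆ Q := by
        intro p hp
        exact hmemQ p (Nat.prime_of_mem_primeFactors hp)
          (le_trans (Nat.le_of_dvd (by omega) (Nat.dvd_of_mem_primeFactors hp)) haN)
          (hE p hp)
      refine ⟨⟨ha1, haN⟩, hsubQ, ?_⟩
      rw [← hcard, omegaE, Finset.filter_true_of_mem hE]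
    have hA : ∑ a ∈ (Finset.Icc 1 N).filter
        (fun a => (∀ p ∈ a.primeFactors, p ∈ E) ∧ omegaE E a = k), w a ≤
        ((∑ p ∈ Q, w p) + C₁) ^ k / (k.factorial : ℝ) := by
      refine le_trans (Finset.sum_le_sum_of_subset_of_nonneg hAsub fun a _ _ => hw0 a) ?_
      exact asum_omega_le hw0 hw1 hwm N Q hQp k C₁ hC1sum
    have hB := bsum_le hw0 hw1 hwm N hN1 E Qc hQcp hmemQc C₂ hC2sum
    have hBnn : 0 ≤ ∑ b ∈ (Finset.Icc 1 N).filter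
        (fun b => ∀ p ∈ b.primeFactors, p ∉ E), w b := Finset.sum_nonneg fun b _ => hw0 b
    have hcomb := le_trans hsplit (mul_le_mul hA hB hBnn (by positivity))
    refine le_trans hcomb ?_
    rw [hT, hMEc, Real.exp_add]
    have h2exp : Real.exp C₂ ≤ Real.exp (2 * C₂) := Real.exp_le_exp.mpr (by linarith)
    calc ((∑ p ∈ Q, w p) + C₁) ^ k / (k.factorial : ℝ) *
          (Real.exp (∑ p ∈ Qc, w p) * Real.exp C₂)
        = Real.exp C₂ * ((∑ p ∈ Q, w p) + C₁) ^ k / (k.factorial : ℝ) *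
          Real.exp (∑ p ∈ Qc, w p) := by ring
      _ ≤ Real.exp (2 * C₂) * ((∑ p ∈ Q, w p) + C₁) ^ k / (k.factorial : ℝ) *
          Real.exp (∑ p ∈ Qc, w p) := by
          gcongr
  · -- Ω case
    intro hhyp2 k hkM
    have h := hhyp2 (N + 1) N
    rw [hQceq, hQeq] at h
    have hs1nn : 0 ≤ ∑ p ∈ Qc, ∑ ℓ ∈ Finset.Icc 2 N, f (p ^ ℓ) / (p : ℝ) ^ ℓ :=
      Finset.sum_nonneg fun p _ => Finset.sum_nonneg fun ℓ _ =>
        div_nonneg (hf0 _) (by positivity)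
    have hs2nn : 0 ≤ ∑ p ∈ Q, ∑ ℓ ∈ Finset.Icc 2 N, f (p ^ ℓ) * α ^ ℓ / (p : ℝ) ^ ℓ :=
      Finset.sum_nonneg fun p _ => Finset.sum_nonneg fun ℓ _ =>
        div_nonneg (mul_nonneg (hf0 _) (pow_nonneg hα.le _)) (by positivity)
    have hC2sum : ∑ p ∈ Qc, ∑ ℓ ∈ Finset.Icc 2 N, w (p ^ ℓ) ≤ C₂ := by
      refine le_trans (le_of_eq ?_) (by linarith :
        ∑ p ∈ Qc, ∑ ℓ ∈ Finset.Icc 2 N, f (p ^ ℓ) / (p : ℝ) ^ ℓ ≤ C₂)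
      exact Finset.sum_congr rfl fun p _ => Finset.sum_congr rfl fun ℓ _ => hcast p ℓ
    have hC2asum : ∑ p ∈ Q, ∑ ℓ ∈ Finset.Icc 2 N, w (p ^ ℓ) * α ^ ℓ ≤ C₂ := by
      refine le_trans (le_of_eq ?_) (by linarith :
        ∑ p ∈ Q, ∑ ℓ ∈ Finset.Icc 2 N, f (p ^ ℓ) * α ^ ℓ / (p : ℝ) ^ ℓ ≤ C₂)
      refine Finset.sum_congr rfl fun p _ => Finset.sum_congr rfl fun ℓ _ => ?_
      rw [hcast p ℓ]
      ring
    have hφ : ∀ n : ℕ, n ≠ 0 → bigOmegaE E (aPart E n) = bigOmegaE E n := by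
      intro n hn
      rw [bigOmegaE, bigOmegaE, aPart_primeFactors, Finset.filter_filter]
      have hset : n.primeFactors.filter (fun p => p ∈ E ∧ p ∈ E)
          = n.primeFactors.filter (fun p => p ∈ E) :=
        Finset.filter_congr fun p _ => by simp
      rw [hset]
      apply Finset.sum_congr rfl
      intro p hp
      rw [aPart_factorization, if_pos hp]
    have hsplit := split_sum hw0 hwm N E (bigOmegaE E) hφ k
    have hAsub : (Finset.Icc 1 N).filter
        (fun a => (∀ p ∈ a.primeFactors, p ∈ E) ∧ bigOmegaE E a = k) ⊆
        (Finset.Icc 1 N).filter (fun a => a.primeFactors ⊆ Q ∧ bigOmega a = k) := by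
      intro a ha
      simp only [Finset.mem_filter, Finset.mem_Icc] at ha ⊢
      obtain ⟨⟨ha1, haN⟩, hE, hcard⟩ := ha
      have hsubQ : a.primeFactors ⊆ Q := by
        intro p hp
        exact hmemQ p (Nat.prime_of_mem_primeFactors hp)
          (le_trans (Nat.le_of_dvd (by omega) (Nat.dvd_of_mem_primeFactors hp)) haN)
          (hE p hp)
      refine ⟨⟨ha1, haN⟩, hsubQ, ?_⟩
      rw [← hcard, bigOmegaE, Finset.filter_true_of_mem hE]
      exact bigOmega_eq_sum (show a ≠ 0 by omega)
    have hkT : (k : ℝ) ≤ α * ∑ p ∈ Q, w p := by rwa [hT] at hkM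
    have hA : ∑ a ∈ (Finset.Icc 1 N).filter
        (fun a => (∀ p ∈ a.primeFactors, p ∈ E) ∧ bigOmegaE E a = k), w a ≤
        Real.exp C₂ * ((∑ p ∈ Q, w p) ^ k / (k.factorial : ℝ)) := by
      refine le_trans (Finset.sum_le_sum_of_subset_of_nonneg hAsub fun a _ _ => hw0 a) ?_
      exact asum_bigomega_le hw0 hw1 hwm N Q hQp k α C₂ hα hkT hC2asum
    have hB := bsum_le hw0 hw1 hwm N hN1 E Qc hQcp hmemQc C₂ hC2sum
    have hBnn : 0 ≤ ∑ b ∈ (Finset.Icc 1 N).filter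
        (fun b => ∀ p ∈ b.primeFactors, p ∉ E), w b := Finset.sum_nonneg fun b _ => hw0 b
    have hcomb := le_trans hsplit (mul_le_mul hA hB hBnn (by positivity))
    refine le_trans hcomb ?_
    rw [hT, hMEc, Real.exp_add]
    have hTT : (∑ p ∈ Q, w p) ^ k ≤ ((∑ p ∈ Q, w p) + C₁) ^ k :=
      pow_le_pow_left₀ hT0 (by linarith) k
    calc Real.exp C₂ * ((∑ p ∈ Q, w p) ^ k / (k.factorial : ℝ)) *
          (Real.exp (∑ p ∈ Qc, w p) * Real.exp C₂)
        = (Real.exp C₂ * Real.exp C₂) * (∑ p ∈ Q, w p) ^ k / (k.factorial : ℝ) *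
          Real.exp (∑ p ∈ Qc, w p) := by ring
      _ = Real.exp (2 * C₂) * (∑ p ∈ Q, w p) ^ k / (k.factorial : ℝ) *
          Real.exp (∑ p ∈ Qc, w p) := by
          rw [← Real.exp_add]
          ring_nf
      _ ≤ Real.exp (2 * C₂) * ((∑ p ∈ Q, w p) + C₁) ^ k / (k.factorial : ℝ) *
          Real.exp (∑ p ∈ Qc, w p) := by
          gcongr


end
end
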